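/- arXiv:0907.3253 — 6 statements merged into one kernel-verified Lean document; each statement's English description precedes it below -/
import Mathlib

section
/- (Hochster's criterion) The toric ring K[A] is normal if and only if every ratio M_1/M_2 of monomials of K[A] such that some positive power (M_1/M_2)^m lies in K[A] itself lies in K[A]. -/
open scoped BigOperators

section Semigroup
variable {σ : Type*} [Fintype σ]

/-- Cast an exponent vector to an integer vector. -/
def vecZ (v : σ → ℕ) : σ → ℤ := fun i => (v i : ℤ)

/-- Cast an integer vector to a rational vector. -/
def vecQ (v : σ → ℤ) : σ → ℚ := fun i => (v i : ℚ)

/-- The affine semigroup `ℤ_{≥0}{a_1,…,a_n}` generated by a set of exponent vectors. -/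
def nnSpan (S : Set (σ → ℕ)) : AddSubmonoid (σ → ℤ) := AddSubmonoid.closure (vecZ '' S)

/-- The group `ℤ{a_1,…,a_n}` generated by a set of exponent vectors. -/
def zSpan (S : Set (σ → ℕ)) : AddSubgroup (σ → ℤ) := AddSubgroup.closure (vecZ '' S)

/-- The rational cone `ℚ_{≥0}{a_1,…,a_n}` (integer points thereof). -/
def qCone (S : Set (σ → ℕ)) : Set (σ → ℤ) :=
  {v | ∃ (n : ℕ) (f : Fin n → (σ → ℕ)) (c : Fin n → ℚ),
    (∀ k, f k ∈ S) ∧ (∀ k, 0 ≤ c k) ∧ vecQ v = ∑ k, c k • vecQ (vecZ (f k))}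

/-- Normality of the affine semigroup generated by `S`:
`ℤ_{≥0} S = ℤ S ∩ ℚ_{≥0} S`. -/
def IsNormalCfg (S : Set (σ → ℕ)) : Prop :=
  ∀ v : σ → ℤ, v ∈ zSpan S → v ∈ qCone S → v ∈ nnSpan S

/-- Very ampleness: `(ℤ S ∩ ℚ_{≥0} S) \ ℤ_{≥0} S` is a finite set. -/
def IsVeryAmpleCfg (S : Set (σ → ℕ)) : Prop :=
  (((zSpan S : Set (σ → ℤ)) ∩ qCone S) \ (nnSpan S : Set (σ → ℤ))).Finite

/-- A configuration: a finite set of exponent vectors lying on a common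
affine hyperplane `w · x = 1`. -/
def IsConfiguration (S : Set (σ → ℕ)) : Prop :=
  S.Finite ∧ ∃ w : σ → ℚ, ∀ v ∈ S, ∑ i, w i * (v i : ℚ) = 1

end Semigroup

section Hochster
open MvPolynomial AddMonoidAlgebra

variable {K : Type*} [Field K] {d n : ℕ}

noncomputable def hAF (a : Fin n → (Fin d → ℕ)) (k : Fin n) : Fin d →₀ ℕ :=
  Finsupp.equivFunOnFinite.symm (a k)

noncomputable def hNN (a : Fin n → (Fin d → ℕ)) : AddSubmonoid (Fin d →₀ ℕ) :=
  AddSubmonoid.closure (Set.range (hAF a))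

noncomputable def hphi (d : ℕ) : (Fin d →₀ ℕ) →+ (Fin d → ℤ) where
  toFun e := fun i => (e i : ℤ)
  map_zero' := by ext i; simp
  map_add' x y := by ext i; simp

lemma hphi_inj : Function.Injective (hphi d) := fun x y h => by
  ext i
  exact Nat.cast_inj.mp (congrFun h i)

lemma hnnSpan_eq (a : Fin n → (Fin d → ℕ)) :
    nnSpan (Set.range a) = (hNN a).map (hphi d) := by
  rw [hNN, AddMonoidHom.map_mclosure, nnSpan]
  have h : ⇑(hphi d) ∘ hAF a = vecZ ∘ a := by
    funext k
    funext i
    simp [hphi, hAF, vecZ]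
  rw [← Set.range_comp, ← Set.range_comp, h]

lemma mem_hnnSpan {a : Fin n → (Fin d → ℕ)} {b : Fin d → ℤ} :
    b ∈ nnSpan (Set.range a) ↔ ∃ u ∈ hNN a, hphi d u = b := by
  rw [hnnSpan_eq]; exact AddSubmonoid.mem_map

lemma hNN_mem_iff {a : Fin n → (Fin d → ℕ)} {u : Fin d →₀ ℕ} :
    u ∈ hNN a ↔ ∃ lam : Fin n → ℕ, ∑ k, lam k • hAF a k = u := by
  constructor
  · intro hu
    induction hu using AddSubmonoid.closure_induction with
    | mem x hx =>
      obtain ⟨k, rfl⟩ := hx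
      refine ⟨Pi.single k 1, ?_⟩
      rw [Finset.sum_eq_single k]
      · simp
      · intro j _ hj; simp [Pi.single_apply, hj]
      · simp
    | zero => exact ⟨0, by simp⟩
    | add x y _ _ hx hy =>
      obtain ⟨l₁, rfl⟩ := hx
      obtain ⟨l₂, rfl⟩ := hy
      exact ⟨l₁ + l₂, by simp [add_smul, Finset.sum_add_distrib]⟩
  · rintro ⟨lam, rfl⟩
    exact sum_mem fun k _ => AddSubmonoid.nsmul_mem _ (AddSubmonoid.subset_closure (Set.mem_range_self k)) _

variable (K) in
def hS (a : Fin n → (Fin d → ℕ)) : Set (MvPolynomial (Fin d) K) :=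
  {p | ∃ k : Fin n, p = MvPolynomial.monomial (Finsupp.equivFunOnFinite.symm (a k)) (1 : K)}

variable (K) in
noncomputable def hT (a : Fin n → (Fin d → ℕ)) : Subalgebra K (MvPolynomial (Fin d) K) where
  carrier := {p | ∀ e ∈ p.support, e ∈ hNN a}
  mul_mem' := by
    classical
    intro p q hp hq e he
    obtain ⟨e₁, h₁, e₂, h₂, rfl⟩ := Finset.mem_add.mp (MvPolynomial.support_mul p q he)
    exact add_mem (hp _ h₁) (hq _ h₂)
  add_mem' := by
    classical
    intro p q hp hq e he
    rcases Finset.mem_union.mp (Finsupp.support_add he) with h | h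
    · exact hp _ h
    · exact hq _ h
  algebraMap_mem' := by
    intro c e he
    rw [MvPolynomial.mem_support_iff, MvPolynomial.algebraMap_eq, MvPolynomial.coeff_C] at he
    rcases eq_or_ne e 0 with rfl | h
    · exact zero_mem _
    · simp [Ne.symm h] at he

lemma monomial_mem_adjoin {a : Fin n → (Fin d → ℕ)} {e : Fin d →₀ ℕ} (he : e ∈ hNN a) :
    (MvPolynomial.monomial e (1 : K)) ∈ Algebra.adjoin K (hS K a) := by
  induction he using AddSubmonoid.closure_induction with
  | mem x hx =>
    obtain ⟨k, rfl⟩ := hx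
    exact Algebra.subset_adjoin ⟨k, rfl⟩
  | zero =>
    rw [MvPolynomial.monomial_zero']
    exact Subalgebra.algebraMap_mem _ 1
  | add x y _ _ hx hy =>
    rw [← one_mul (1 : K), ← MvPolynomial.monomial_mul]
    exact mul_mem hx hy

lemma mem_adjoin_iff {a : Fin n → (Fin d → ℕ)} {p : MvPolynomial (Fin d) K} :
    p ∈ Algebra.adjoin K (hS K a) ↔ ∀ e ∈ p.support, e ∈ hNN a := by
  constructor
  · intro hp
    have key : Algebra.adjoin K (hS K a) ≤ hT K a := by
      refine Algebra.adjoin_le fun q hq => ?_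
      obtain ⟨k, rfl⟩ := hq
      intro e he
      rw [MvPolynomial.mem_support_iff, MvPolynomial.coeff_monomial] at he
      rcases eq_or_ne (Finsupp.equivFunOnFinite.symm (a k)) e with rfl | h
      · exact AddSubmonoid.subset_closure (Set.mem_range_self k)
      · simp [h] at he
    exact key hp
  · intro hp
    rw [← MvPolynomial.support_sum_monomial_coeff p]
    refine sum_mem fun e he => ?_
    have : MvPolynomial.monomial e (MvPolynomial.coeff e p)
        = MvPolynomial.C (MvPolynomial.coeff e p) * MvPolynomial.monomial e (1 : K) := by
      rw [MvPolynomial.C_mul_monomial, mul_one]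
    rw [this, ← MvPolynomial.algebraMap_eq]
    exact mul_mem (Subalgebra.algebraMap_mem _ _) (monomial_mem_adjoin (hp e he))


noncomputable def lexp (p : MvPolynomial (Fin d) K) : Fin d →₀ ℕ :=
  ofLex (AddMonoidAlgebra.supDegree toLex p)

lemma toLex_lexp (p : MvPolynomial (Fin d) K) :
    toLex (lexp p) = AddMonoidAlgebra.supDegree toLex p := rfl

lemma lexp_mem_support {p : MvPolynomial (Fin d) K} (hp : p ≠ 0) : lexp p ∈ p.support := by
  obtain ⟨e, he, hd⟩ := AddMonoidAlgebra.exists_supDegree_mem_support toLex hp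
  rw [lexp, hd, ofLex_toLex]
  exact he

lemma lexp_mul {p q : MvPolynomial (Fin d) K} (hp : p ≠ 0) (hq : q ≠ 0) :
    lexp (p * q) = lexp p + lexp q := by
  have h := AddMonoidAlgebra.supDegree_mul (D := toLex) toLex.injective toLex_add
    (mul_ne_zero ((AddMonoidAlgebra.leadingCoeff_ne_zero toLex.injective).mpr hp)
      ((AddMonoidAlgebra.leadingCoeff_ne_zero toLex.injective).mpr hq)) hp hq
  rw [lexp, h, ofLex_add]
  rfl

lemma lexp_one : lexp (1 : MvPolynomial (Fin d) K) = 0 := by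
  have h1 : (1 : MvPolynomial (Fin d) K) = AddMonoidAlgebra.single 0 1 := by
    rw [MvPolynomial.single_eq_monomial, MvPolynomial.monomial_zero', MvPolynomial.C_1]
  rw [lexp, h1, AddMonoidAlgebra.supDegree_single_ne_zero _ one_ne_zero, ofLex_toLex]

lemma lexp_pow {p : MvPolynomial (Fin d) K} (hp : p ≠ 0) (m : ℕ) :
    lexp (p ^ m) = m • lexp p := by
  induction m with
  | zero => simpa using lexp_one
  | succ m ih =>
    rw [pow_succ, lexp_mul (pow_ne_zero m hp) hp, ih, succ_nsmul]


lemma key_div {a : Fin n → (Fin d → ℕ)}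
    (Hsat : ∀ b₁ ∈ nnSpan (Set.range a), ∀ b₂ ∈ nnSpan (Set.range a),
        (∃ m : ℕ, 0 < m ∧ (m : ℤ) • (b₁ - b₂) ∈ nnSpan (Set.range a)) →
          b₁ - b₂ ∈ nnSpan (Set.range a))
    (c q : MvPolynomial (Fin d) K) (hc : c ≠ 0) (hq : q ≠ 0)
    (hcR : c ∈ Algebra.adjoin K (hS K a)) (hqR : q ∈ Algebra.adjoin K (hS K a)) :
    ∀ p : MvPolynomial (Fin d) K, p ∈ Algebra.adjoin K (hS K a) →
      (∀ m : ℕ, ∃ r ∈ Algebra.adjoin K (hS K a), c * p ^ m = r * q ^ m) →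
      ∃ y ∈ Algebra.adjoin K (hS K a), p = y * q := by
  have wf : WellFoundedLT (Lex (Fin d →₀ ℕ)) := Finsupp.Lex.wellFoundedLT_of_finite
  suffices main : ∀ t : Lex (Fin d →₀ ℕ), ∀ p : MvPolynomial (Fin d) K,
      AddMonoidAlgebra.supDegree toLex p = t → p ∈ Algebra.adjoin K (hS K a) →
      (∀ m : ℕ, ∃ r ∈ Algebra.adjoin K (hS K a), c * p ^ m = r * q ^ m) →
      ∃ y ∈ Algebra.adjoin K (hS K a), p = y * q by
    exact fun p => main _ p rfl
  intro t
  refine wf.wf.induction (C := fun t => ∀ p : MvPolynomial (Fin d) K,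
      AddMonoidAlgebra.supDegree toLex p = t → p ∈ Algebra.adjoin K (hS K a) →
      (∀ m : ℕ, ∃ r ∈ Algebra.adjoin K (hS K a), c * p ^ m = r * q ^ m) →
      ∃ y ∈ Algebra.adjoin K (hS K a), p = y * q) t ?_
  intro t IH p hpt hpR hrel
  rcases eq_or_ne p 0 with rfl | hp0
  · exact ⟨0, Subalgebra.zero_mem _, by rw [zero_mul]⟩
  choose r hrR hr using hrel
  have hr0 : ∀ m, r m ≠ 0 := by
    intro m h0
    apply mul_ne_zero hc (pow_ne_zero m hp0)
    rw [hr m, h0, zero_mul]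
  have hdeg : ∀ m : ℕ, lexp c + m • lexp p = lexp (r m) + m • lexp q := by
    intro m
    have h := congrArg lexp (hr m)
    rwa [lexp_mul hc (pow_ne_zero m hp0), lexp_mul (hr0 m) (pow_ne_zero m hq),
      lexp_pow hp0, lexp_pow hq] at h
  have hrep : ∀ m : ℕ, ∃ lam : Fin n → ℕ, ∑ k, lam k • hAF a k = lexp (r m) :=
    fun m => hNN_mem_iff.mp (mem_adjoin_iff.mp (hrR m) _ (lexp_mem_support (hr0 m)))
  choose lam hlam using hrep
  have hpwo : (Set.univ : Set (Fin n → ℕ)).IsPWO := by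
    have hwo : ∀ i : Fin n, IsWellOrder ((fun _ : Fin n => ℕ) i) (· < ·) := fun _ => inferInstance
    exact Set.isPWO_of_wellQuasiOrderedLE _
  obtain ⟨m₁, m₂, hm12, hle⟩ := Set.PartiallyWellOrderedOn.exists_lt hpwo (f := lam) (fun _ => Set.mem_univ _)
  set δ : Fin d →₀ ℕ := ∑ k, (lam m₂ k - lam m₁ k) • hAF a k with hδdef
  have hδNN : δ ∈ hNN a := sum_mem fun k _ =>
    AddSubmonoid.nsmul_mem _ (AddSubmonoid.subset_closure (Set.mem_range_self k)) _
  have hδeq : δ + lexp (r m₁) = lexp (r m₂) := by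
    rw [hδdef, ← hlam m₁, ← hlam m₂, ← Finset.sum_add_distrib]
    refine Finset.sum_congr rfl fun k _ => ?_
    rw [← add_smul, Nat.sub_add_cancel (hle k)]
  have hLpNN : lexp p ∈ hNN a := mem_adjoin_iff.mp hpR _ (lexp_mem_support hp0)
  have hLqNN : lexp q ∈ hNN a := mem_adjoin_iff.mp hqR _ (lexp_mem_support hq)
  have hb₁ : hphi d (lexp p) ∈ nnSpan (Set.range a) := mem_hnnSpan.mpr ⟨_, hLpNN, rfl⟩
  have hb₂ : hphi d (lexp q) ∈ nnSpan (Set.range a) := mem_hnnSpan.mpr ⟨_, hLqNN, rfl⟩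
  have hZ : ∀ m : ℕ, hphi d (lexp (r m)) + (m : ℤ) • hphi d (lexp q)
      = hphi d (lexp c) + (m : ℤ) • hphi d (lexp p) := by
    intro m
    have h := congrArg (hphi d) (hdeg m)
    rw [map_add, map_add, map_nsmul, map_nsmul] at h
    rw [natCast_zsmul, natCast_zsmul]
    exact h.symm
  have hmul : ((m₂ - m₁ : ℕ) : ℤ) • (hphi d (lexp p) - hphi d (lexp q)) = hphi d δ := by
    have h2 := hZ m₂
    have h1 := hZ m₁
    have hδ' : hphi d δ + hphi d (lexp (r m₁)) = hphi d (lexp (r m₂)) := by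
      rw [← map_add, hδeq]
    funext i
    have h2i := congrFun h2 i
    have h1i := congrFun h1 i
    have hδi := congrFun hδ' i
    simp only [Pi.add_apply, Pi.smul_apply, Pi.sub_apply, smul_eq_mul] at h2i h1i hδi ⊢
    have hcast : ((m₂ - m₁ : ℕ) : ℤ) = (m₂ : ℤ) - m₁ := by
      exact_mod_cast Nat.cast_sub hm12.le
    rw [hcast]
    linear_combination h1i - h2i - hδi
  have hsat := Hsat _ hb₁ _ hb₂ ⟨m₂ - m₁, Nat.sub_pos_of_lt hm12, by
    rw [hmul]; exact mem_hnnSpan.mpr ⟨δ, hδNN, rfl⟩⟩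
  obtain ⟨e, heNN, he⟩ := mem_hnnSpan.mp hsat
  have heq : e + lexp q = lexp p := by
    apply hphi_inj
    rw [map_add, he, sub_add_cancel]
  set lcp := AddMonoidAlgebra.leadingCoeff toLex p with hlcpdef
  set lcq := AddMonoidAlgebra.leadingCoeff toLex q with hlcqdef
  have hlcp : lcp ≠ 0 := (AddMonoidAlgebra.leadingCoeff_ne_zero toLex.injective).mpr hp0
  have hlcq : lcq ≠ 0 := (AddMonoidAlgebra.leadingCoeff_ne_zero toLex.injective).mpr hq
  set c' : K := lcp * lcq⁻¹ with hc'def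
  have hc' : c' ≠ 0 := mul_ne_zero hlcp (inv_ne_zero hlcq)
  set y₀ : MvPolynomial (Fin d) K := MvPolynomial.monomial e c' with hy₀def
  have hy₀R : y₀ ∈ Algebra.adjoin K (hS K a) := by
    rw [mem_adjoin_iff]
    intro e' he'
    rw [MvPolynomial.mem_support_iff, hy₀def, MvPolynomial.coeff_monomial] at he'
    rcases eq_or_ne e e' with rfl | hne
    · exact heNN
    · simp [hne] at he'
  have hy₀0 : y₀ ≠ 0 := by
    rw [hy₀def, Ne, MvPolynomial.monomial_eq_zero]
    exact hc'
  have hy₀single : y₀ = AddMonoidAlgebra.single e c' := (MvPolynomial.single_eq_monomial e c').symm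
  have hlcy : AddMonoidAlgebra.leadingCoeff toLex y₀ = c' := by
    rw [hy₀single, AddMonoidAlgebra.leadingCoeff_single toLex.injective]
  have hdegy : AddMonoidAlgebra.supDegree toLex (y₀ * q) = AddMonoidAlgebra.supDegree toLex p := by
    rw [AddMonoidAlgebra.supDegree_mul toLex.injective toLex_add
      (by rw [hlcy]; exact mul_ne_zero hc' hlcq) hy₀0 hq]
    rw [hy₀single, AddMonoidAlgebra.supDegree_single_ne_zero _ hc', ← toLex_lexp q,
      ← toLex_add, heq, toLex_lexp]
  have hlc : AddMonoidAlgebra.leadingCoeff toLex p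
      = AddMonoidAlgebra.leadingCoeff toLex (y₀ * q) := by
    rw [AddMonoidAlgebra.leadingCoeff_mul toLex.injective toLex_add, hlcy, ← hlcqdef, ← hlcpdef,
      hc'def, mul_assoc, inv_mul_cancel₀ hlcq, mul_one]
  rcases AddMonoidAlgebra.supDegree_sub_lt_of_leadingCoeff_eq toLex.injective hdegy.symm hlc
    with hlt | h0
  · have hp'R : p - y₀ * q ∈ Algebra.adjoin K (hS K a) :=
      sub_mem hpR (mul_mem hy₀R hqR)
    have hrel' : ∀ m : ℕ, ∃ r' ∈ Algebra.adjoin K (hS K a),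
        c * (p - y₀ * q) ^ m = r' * q ^ m := by
      intro m
      refine ⟨∑ i ∈ Finset.range (m + 1),
        r i * (-y₀) ^ (m - i) * (m.choose i : MvPolynomial (Fin d) K), ?_, ?_⟩
      · exact sum_mem fun i _ => mul_mem (mul_mem (hrR i) (pow_mem (neg_mem hy₀R) _))
          (Subalgebra.natCast_mem _ _)
      · rw [sub_eq_add_neg, add_pow, Finset.mul_sum, Finset.sum_mul]
        refine Finset.sum_congr rfl fun i hi => ?_
        have hile : i ≤ m := Nat.lt_succ_iff.mp (Finset.mem_range.mp hi)
        have hqq : q ^ i * q ^ (m - i) = q ^ m := by rw [← pow_add, Nat.add_sub_cancel' hile]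
        have hneg : (-(y₀ * q)) ^ (m - i) = (-y₀) ^ (m - i) * q ^ (m - i) := by
          rw [neg_mul_eq_neg_mul, mul_pow]
        calc c * (p ^ i * (-(y₀ * q)) ^ (m - i) * (m.choose i : MvPolynomial (Fin d) K))
            = (c * p ^ i) * ((-y₀) ^ (m - i) * q ^ (m - i))
                * (m.choose i : MvPolynomial (Fin d) K) := by rw [hneg]; ring
          _ = (r i * q ^ i) * ((-y₀) ^ (m - i) * q ^ (m - i))
                * (m.choose i : MvPolynomial (Fin d) K) := by rw [hr i]
          _ = r i * (-y₀) ^ (m - i) * (m.choose i : MvPolynomial (Fin d) K)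
                * (q ^ i * q ^ (m - i)) := by ring
          _ = r i * (-y₀) ^ (m - i) * (m.choose i : MvPolynomial (Fin d) K) * q ^ m := by
                rw [hqq]
    obtain ⟨y', hy'R, hy'⟩ := IH _ (hpt ▸ hlt) _ rfl hp'R hrel'
    refine ⟨y' + y₀, Subalgebra.add_mem _ hy'R hy₀R, ?_⟩
    rw [add_mul, ← hy']
    ring
  · exact ⟨y₀, hy₀R, h0⟩

end Hochster


section AbstractRing
variable {A : Type*} [CommRing A] [IsDomain A]

/-- In an integrally closed domain, if `y₁ ^ m = y₃ * y₂ ^ m` with `m > 0`, then `y₂ ∣ y₁`. -/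
lemma exists_mul_eq_of_pow_eq [IsIntegrallyClosed A] (y₁ y₂ y₃ : A) (hy₂0 : y₂ ≠ 0)
    (m : ℕ) (hm : 0 < m) (hy : y₁ ^ m = y₃ * y₂ ^ m) : ∃ y : A, y * y₂ = y₁ := by
  have halg2 : algebraMap A (FractionRing A) y₂ ≠ 0 := by
    intro h
    exact hy₂0 (IsFractionRing.injective A (FractionRing A) (by rw [h, map_zero]))
  set x : FractionRing A :=
    algebraMap A (FractionRing A) y₁ / algebraMap A (FractionRing A) y₂ with hxdef
  have hxm : x ^ m = algebraMap A (FractionRing A) y₃ := by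
    rw [hxdef, div_pow, ← map_pow, ← map_pow, hy, map_mul]
    exact mul_div_cancel_right₀ _ (by rw [map_pow]; exact pow_ne_zero m halg2)
  have hint : IsIntegral A x := by
    refine ⟨Polynomial.X ^ m - Polynomial.C y₃,
      Polynomial.monic_X_pow_sub_C _ (Nat.pos_iff_ne_zero.mp hm), ?_⟩
    rw [Polynomial.eval₂_sub, Polynomial.eval₂_pow, Polynomial.eval₂_X, Polynomial.eval₂_C,
      hxm, sub_self]
  obtain ⟨y, hy'⟩ := IsIntegrallyClosed.isIntegral_iff.mp hint
  refine ⟨y, ?_⟩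
  apply IsFractionRing.injective A (FractionRing A)
  rw [map_mul, hy', hxdef, div_mul_cancel₀ _ halg2]

/-- A domain in which "almost integral" elements (in the divisibility form) are honest divisors
is integrally closed. -/
lemma isIntegrallyClosed_of_div
    (H : ∀ b q : A, b ≠ 0 → q ≠ 0 → ∀ p : A,
      (∀ m : ℕ, ∃ r : A, b * p ^ m = r * q ^ m) → ∃ y : A, p = y * q) :
    IsIntegrallyClosed A := by
  rw [isIntegrallyClosed_iff (FractionRing A)]
  intro x hx
  obtain ⟨p₀, q₀, hq₀, rfl⟩ := IsFractionRing.div_surjective (A := A) x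
  obtain ⟨s, hs⟩ := hx.fg_adjoin_singleton
  obtain ⟨b, hb⟩ := IsLocalization.exist_integer_multiples_of_finset (nonZeroDivisors A) s
  have hmem : ∀ m : ℕ, (algebraMap A (FractionRing A) p₀ / algebraMap A (FractionRing A) q₀) ^ m
      ∈ Submodule.span A (s : Set (FractionRing A)) := by
    intro m
    rw [hs]
    exact Subalgebra.pow_mem _ (Algebra.self_mem_adjoin_singleton _ _) m
  have hint : ∀ z ∈ Submodule.span A (s : Set (FractionRing A)),
      IsLocalization.IsInteger A ((b : A) • z) := by
    intro z hz
    induction hz using Submodule.span_induction with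
    | mem z hz => exact hb z hz
    | zero => rw [smul_zero]; exact IsLocalization.isInteger_zero
    | add w z _ _ hw hz => rw [smul_add]; exact IsLocalization.isInteger_add hw hz
    | smul r z _ hz => rw [smul_comm]; exact IsLocalization.isInteger_smul hz
  have hr : ∀ m : ℕ, ∃ rm : A, algebraMap A (FractionRing A) rm
      = algebraMap A (FractionRing A) (b : A)
        * (algebraMap A (FractionRing A) p₀ / algebraMap A (FractionRing A) q₀) ^ m := by
    intro m
    have h5 := hint _ (hmem m)
    rwa [Algebra.smul_def] at h5
  choose rm hrm using hr
  have halgq : algebraMap A (FractionRing A) q₀ ≠ 0 :=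
    IsFractionRing.to_map_ne_zero_of_mem_nonZeroDivisors hq₀
  have heq : ∀ m : ℕ, (b : A) * p₀ ^ m = rm m * q₀ ^ m := by
    intro m
    apply IsFractionRing.injective A (FractionRing A)
    rw [map_mul, map_mul, map_pow, map_pow, hrm]
    field_simp
    rw [div_pow, div_mul_cancel₀ _ (pow_ne_zero m halgq)]
  obtain ⟨y, hy⟩ := H (b : A) q₀ (nonZeroDivisors.ne_zero b.2) (nonZeroDivisors.ne_zero hq₀)
    p₀ (fun m => ⟨rm m, heq m⟩)
  refine ⟨y, ?_⟩
  rw [eq_div_iff halgq, ← map_mul, ← hy]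

end AbstractRing


/-- Hochster's criterion: the toric ring `K[A]` is normal if and only if every
ratio `M_1/M_2` of monomials of `K[A]` (encoded by the difference `b_1 - b_2` of elements of
the affine semigroup of exponent vectors) some positive power of which lies in `K[A]`
itself lies in `K[A]`. -/
theorem hochster_criterion (K : Type*) [Field K] {d n : ℕ} (a : Fin n → (Fin d → ℕ))
    (hcfg : IsConfiguration (Set.range a)) :
    IsIntegrallyClosed
      ↥(Algebra.adjoin K {p : MvPolynomial (Fin d) K |
          ∃ k : Fin n, p = MvPolynomial.monomial (Finsupp.equivFunOnFinite.symm (a k)) (1 : K)})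
    ↔ (∀ b₁ ∈ nnSpan (Set.range a), ∀ b₂ ∈ nnSpan (Set.range a),
        (∃ m : ℕ, 0 < m ∧ (m : ℤ) • (b₁ - b₂) ∈ nnSpan (Set.range a)) →
          b₁ - b₂ ∈ nnSpan (Set.range a)) := by
  show IsIntegrallyClosed ↥(Algebra.adjoin K (hS K a)) ↔ _
  constructor
  · -- normal ⇒ saturated
    intro hIC b₁ hb₁ b₂ hb₂ hpow
    obtain ⟨m, hm, hmem⟩ := hpow
    obtain ⟨u₁, hu₁, rfl⟩ := mem_hnnSpan.mp hb₁
    obtain ⟨u₂, hu₂, rfl⟩ := mem_hnnSpan.mp hb₂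
    obtain ⟨u₃, hu₃, hu₃eq⟩ := mem_hnnSpan.mp hmem
    have hkey : u₃ + m • u₂ = m • u₁ := by
      apply hphi_inj
      rw [map_add, map_nsmul, map_nsmul, hu₃eq, smul_sub, natCast_zsmul, natCast_zsmul,
        sub_add_cancel]
    haveI : IsIntegrallyClosed ↥(Algebra.adjoin K (hS K a)) := hIC
    have hy : (⟨MvPolynomial.monomial u₁ (1 : K), monomial_mem_adjoin hu₁⟩ :
          ↥(Algebra.adjoin K (hS K a))) ^ m
        = ⟨MvPolynomial.monomial u₃ (1 : K), monomial_mem_adjoin hu₃⟩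
          * (⟨MvPolynomial.monomial u₂ (1 : K), monomial_mem_adjoin hu₂⟩ :
          ↥(Algebra.adjoin K (hS K a))) ^ m := by
      apply Subtype.ext
      push_cast
      rw [MvPolynomial.monomial_pow, MvPolynomial.monomial_pow, MvPolynomial.monomial_mul, ← hkey]
      simp
    have hy₂0 : (⟨MvPolynomial.monomial u₂ (1 : K), monomial_mem_adjoin hu₂⟩ :
        ↥(Algebra.adjoin K (hS K a))) ≠ 0 := by
      intro h
      have h2 : MvPolynomial.monomial u₂ (1 : K) = 0 := by
        simpa using congrArg Subtype.val h
      rw [MvPolynomial.monomial_eq_zero] at h2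
      exact one_ne_zero h2
    obtain ⟨y, hmul⟩ := exists_mul_eq_of_pow_eq _ _ _ hy₂0 m hm hy
    have hmulP : (y : MvPolynomial (Fin d) K) * MvPolynomial.monomial u₂ (1 : K)
        = MvPolynomial.monomial u₁ (1 : K) := by
      have h3 := congrArg Subtype.val hmul
      push_cast at h3
      exact h3
    have hy0 : (y : MvPolynomial (Fin d) K) ≠ 0 := by
      intro h
      rw [h, zero_mul] at hmulP
      exact one_ne_zero ((MvPolynomial.monomial_eq_zero).mp hmulP.symm)
    obtain ⟨s, hs⟩ := MvPolynomial.ne_zero_iff.mp hy0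
    have hcoeff : MvPolynomial.coeff (s + u₂)
        ((y : MvPolynomial (Fin d) K) * MvPolynomial.monomial u₂ (1 : K))
        = MvPolynomial.coeff s (y : MvPolynomial (Fin d) K) := by
      rw [MvPolynomial.coeff_mul_monomial, mul_one]
    have hsu : u₁ = s + u₂ := by
      by_contra hne
      rw [hmulP, MvPolynomial.coeff_monomial, if_neg hne] at hcoeff
      exact hs hcoeff.symm
    have hsNN : s ∈ hNN a := mem_adjoin_iff.mp y.2 s (MvPolynomial.mem_support_iff.mpr hs)
    refine mem_hnnSpan.mpr ⟨s, hsNN, ?_⟩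
    have h4 : hphi d s + hphi d u₂ = hphi d u₁ := by rw [← map_add, ← hsu]
    exact eq_sub_of_add_eq h4
  · -- saturated ⇒ normal
    intro Hsat
    refine isIntegrallyClosed_of_div (A := ↥(Algebra.adjoin K (hS K a))) ?_
    intro b q hb0 hq0 p hrel
    choose r hr using hrel
    have hb0' : ((b : ↥(Algebra.adjoin K (hS K a))) : MvPolynomial (Fin d) K) ≠ 0 :=
      fun h => hb0 (Subtype.ext h)
    have hq0' : ((q : ↥(Algebra.adjoin K (hS K a))) : MvPolynomial (Fin d) K) ≠ 0 :=
      fun h => hq0 (Subtype.ext h)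
    obtain ⟨y, hyR, hy⟩ := key_div Hsat _ _ hb0' hq0' b.2 q.2 (p : MvPolynomial (Fin d) K) p.2
      (fun m => ⟨((r m : ↥(Algebra.adjoin K (hS K a))) : MvPolynomial (Fin d) K), (r m).2, by
        have h6 := congrArg Subtype.val (hr m)
        push_cast at h6
        exact h6⟩)
    exact ⟨⟨y, hyR⟩, Subtype.ext (by push_cast; exact hy)⟩
end

section
/- If the toric rings K[A], K[B_1], ..., K[B_d] are all normal, then the toric ring K[A(B_1,...,B_d)] of the nested configuration is normal. -/
open scoped BigOperators

section Nested
variable {d : ℕ} {μ : Fin d → ℕ}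

/-- Embed a vector of exponents of the block of variables `u^{(i)}`
into the exponent space of all variables `u^{(1)},…,u^{(d)}`. -/
def blockEmb (μ : Fin d → ℕ) (i : Fin d) (v : Fin (μ i) → ℕ) :
    ((Σ j : Fin d, Fin (μ j)) → ℕ) :=
  fun p => if h : p.1 = i then v (h ▸ p.2) else 0

/-- The nested configuration `A(B_1,…,B_d)`: exponent vectors of the monomials
`m_{j_1}^{(i_1)} ⋯ m_{j_r}^{(i_r)}` where `t_{i_1} ⋯ t_{i_r} ∈ A`. -/
def Nested (A : Set (Fin d → ℕ)) (B : ∀ i : Fin d, Set (Fin (μ i) → ℕ)) :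
    Set ((Σ j : Fin d, Fin (μ j)) → ℕ) :=
  {v | ∃ a ∈ A, ∃ c : ∀ i : Fin d, Multiset (Fin (μ i) → ℕ),
    (∀ i, Multiset.card (c i) = a i) ∧ (∀ i, ∀ b ∈ c i, b ∈ B i) ∧
    v = ∑ i : Fin d, blockEmb μ i (c i).sum}

end Nested

set_option linter.unusedSectionVars false

section Aux
variable {σ : Type*} [Fintype σ]

lemma vecZ_add (x y : σ → ℕ) : vecZ (x + y) = vecZ x + vecZ y := by
  funext i; simp [vecZ]

lemma vecZ_zero : vecZ (0 : σ → ℕ) = 0 := by funext i; simp [vecZ]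

lemma vecQ_add (x y : σ → ℤ) : vecQ (x + y) = vecQ x + vecQ y := by
  funext i; simp [vecQ]

lemma vecQ_neg (x : σ → ℤ) : vecQ (-x) = -vecQ x := by
  funext i; simp [vecQ]

lemma vecQ_zero : vecQ (0 : σ → ℤ) = 0 := by funext i; simp [vecQ]

lemma vecZ_injective : Function.Injective (vecZ (σ := σ)) := by
  intro x y h
  funext i
  have h2 : ((x i : ℕ) : ℤ) = ((y i : ℕ) : ℤ) := congrFun h i
  exact_mod_cast h2

lemma vecQ_injective : Function.Injective (vecQ (σ := σ)) := by
  intro x y h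
  funext i
  have h2 : ((x i : ℤ) : ℚ) = ((y i : ℤ) : ℚ) := congrFun h i
  exact_mod_cast h2

lemma msum_apply {ι : Type*} {γ : ι → Type*} [∀ i, AddCommMonoid (γ i)]
    (M : Multiset (∀ i, γ i)) (j : ι) : M.sum j = (M.map fun x => x j).sum := by
  induction M using Multiset.induction_on with
  | empty => simp
  | cons b M ih => simp [ih]

lemma msum_cast (M : Multiset (σ → ℕ)) (j : σ) :
    ((M.map (fun b => ((b j : ℕ) : ℚ))).sum) = ((M.sum j : ℕ) : ℚ) := by
  induction M using Multiset.induction_on with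
  | empty => simp
  | cons b M ih => simp [ih]

lemma vecZ_msum (M : Multiset (σ → ℕ)) : vecZ M.sum = (M.map vecZ).sum := by
  induction M using Multiset.induction_on with
  | empty => simp [vecZ_zero]
  | cons b M ih => simp [vecZ_add, ih]

lemma mem_nnSpan_iff {S : Set (σ → ℕ)} {v : σ → ℤ} :
    v ∈ nnSpan S ↔ ∃ M : Multiset (σ → ℕ), (∀ b ∈ M, b ∈ S) ∧ v = vecZ M.sum := by
  constructor
  · intro hv
    induction hv using AddSubmonoid.closure_induction with
    | mem x hx =>
      obtain ⟨b, hb, rfl⟩ := hx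
      exact ⟨{b}, by simpa using hb, by simp⟩
    | zero => exact ⟨0, by simp, by simp [vecZ_zero]⟩
    | add x y hx hy ihx ihy =>
      obtain ⟨M₁, hM₁, rfl⟩ := ihx
      obtain ⟨M₂, hM₂, rfl⟩ := ihy
      refine ⟨M₁ + M₂, ?_, by simp [vecZ_add]⟩
      intro b hb
      rcases Multiset.mem_add.1 hb with h | h
      · exact hM₁ b h
      · exact hM₂ b h
  · rintro ⟨M, hM, rfl⟩
    rw [vecZ_msum]
    refine AddSubmonoid.multiset_sum_mem _ _ ?_
    intro x hx
    obtain ⟨b, hb, rfl⟩ := Multiset.mem_map.1 hx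
    exact AddSubmonoid.subset_closure ⟨b, hM b hb, rfl⟩

lemma qCone_of_multiset {S : Set (σ → ℕ)} {v : σ → ℤ} (T : Multiset (ℚ × (σ → ℕ)))
    (hT : ∀ p ∈ T, 0 ≤ p.1 ∧ p.2 ∈ S)
    (hv : vecQ v = (T.map (fun p => p.1 • vecQ (vecZ p.2))).sum) : v ∈ qCone S := by
  classical
  set l := T.toList with hl
  have hlT : (l : Multiset (ℚ × (σ → ℕ))) = T := T.coe_toList
  refine ⟨l.length, fun k => (l[(k : ℕ)]).2, fun k => (l[(k : ℕ)]).1, ?_, ?_, ?_⟩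
  · intro k
    exact (hT _ (Multiset.mem_toList.1 (List.getElem_mem k.2))).2
  · intro k
    exact (hT _ (Multiset.mem_toList.1 (List.getElem_mem k.2))).1
  · rw [hv]
    conv_lhs => rw [← hlT]
    rw [show ((l : Multiset (ℚ × (σ → ℕ))).map (fun p => p.1 • vecQ (vecZ p.2))).sum
        = (l.map (fun p => p.1 • vecQ (vecZ p.2))).sum from rfl]
    rw [← Fin.sum_univ_fun_getElem l (fun p => p.1 • vecQ (vecZ p.2))]

lemma multiset_split {α : Type*} (M : Multiset α) (m : ℕ) (h : m ≤ Multiset.card M) :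
    ∃ C M', M = C + M' ∧ Multiset.card C = m := by
  classical
  refine ⟨(M.toList.take m : List α), (M.toList.drop m : List α), ?_, ?_⟩
  · rw [Multiset.coe_add, List.take_append_drop, Multiset.coe_toList]
  · simp only [Multiset.coe_card, List.length_take, Multiset.length_toList]
    omega

end Aux

section NestedAux
variable {d : ℕ} {μ : Fin d → ℕ}

lemma blockEmb_apply_same (i : Fin d) (v : Fin (μ i) → ℕ) (j : Fin (μ i)) :
    blockEmb μ i v ⟨i, j⟩ = v j := by
  simp [blockEmb]

lemma blockEmb_apply_ne {i i' : Fin d} (h : i' ≠ i) (v : Fin (μ i) → ℕ) (j : Fin (μ i')) :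
    blockEmb μ i v ⟨i', j⟩ = 0 := by
  simp [blockEmb, h]

lemma blockEmb_add (i : Fin d) (x y : Fin (μ i) → ℕ) :
    blockEmb μ i (x + y) = blockEmb μ i x + blockEmb μ i y := by
  funext p
  obtain ⟨i', j⟩ := p
  by_cases h : i' = i
  · subst h; simp [blockEmb_apply_same]
  · simp [blockEmb_apply_ne h]

lemma blockEmb_zero (i : Fin d) : blockEmb μ i (0 : Fin (μ i) → ℕ) = 0 := by
  funext p
  obtain ⟨i', j⟩ := p
  by_cases h : i' = i
  · subst h; simp [blockEmb_apply_same]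
  · simp [blockEmb_apply_ne h]

lemma sum_blockEmb_apply (g : ∀ i : Fin d, Fin (μ i) → ℕ) (i : Fin d) (j : Fin (μ i)) :
    (∑ i' : Fin d, blockEmb μ i' (g i')) ⟨i, j⟩ = g i j := by
  rw [Finset.sum_apply]
  rw [Finset.sum_eq_single i]
  · exact blockEmb_apply_same i (g i) j
  · intro b _ hb
    exact blockEmb_apply_ne (Ne.symm hb) (g b) j
  · intro h; exact absurd (Finset.mem_univ i) h

end NestedAux

/-- if the toric rings `K[A]`, `K[B_1]`, …, `K[B_d]` are all normal, then
the toric ring of the nested configuration `A(B_1,…,B_d)` is normal. -/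
theorem nested_normal {d r : ℕ} {μ : Fin d → ℕ}
    (A : Set (Fin d → ℕ)) (B : ∀ i : Fin d, Set (Fin (μ i) → ℕ))
    (hA : IsConfiguration A)
    (hdeg : ∀ v ∈ A, ∑ i, v i = r)
    (hcov : ∀ i : Fin d, ∃ v ∈ A, v i ≠ 0)
    (hB : ∀ i, IsConfiguration (B i))
    (hAn : IsNormalCfg A) (hBn : ∀ i, IsNormalCfg (B i)) :
    IsNormalCfg (Nested A B) := by
  classical
  intro v hvZ hvQ
  choose wB hwB using fun i => (hB i).2
  -- the hyperplane functional of `B i` counts multiset cardinalities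
  have hyper : ∀ (i : Fin d) (M : Multiset (Fin (μ i) → ℕ)), (∀ b ∈ M, b ∈ B i) →
      ∑ j, wB i j * ((M.sum : Fin (μ i) → ℕ) j : ℚ) = (Multiset.card M : ℚ) := by
    intro i M
    induction M using Multiset.induction_on with
    | empty => intro _; simp
    | cons b M ih =>
      intro h
      have hb : ∑ j, wB i j * ((b j : ℕ) : ℚ) = 1 := hwB i b (h b (Multiset.mem_cons_self b M))
      have ihM := ih (fun b' hb' => h b' (Multiset.mem_cons_of_mem hb'))
      simp only [Multiset.sum_cons, Pi.add_apply, Nat.cast_add, mul_add,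
        Finset.sum_add_distrib, hb, ihM, Multiset.card_cons]
      push_cast
      ring
  -- destructure the cone membership
  obtain ⟨n, f, q, hf, hq, he⟩ := hvQ
  choose a ha c hc hcb hfe using hf
  -- pointwise identity from the cone representation
  have hpt : ∀ (i : Fin d) (j : Fin (μ i)),
      ((v ⟨i, j⟩ : ℤ) : ℚ) = ∑ k, q k * (((c k i).sum j : ℕ) : ℚ) := by
    intro i j
    have h0 := congrFun he ⟨i, j⟩
    rw [Finset.sum_apply] at h0
    show vecQ v ⟨i, j⟩ = _
    rw [h0]
    refine Finset.sum_congr rfl fun k _ => ?_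
    rw [Pi.smul_apply, smul_eq_mul]
    congr 1
    show (((f k ⟨i, j⟩ : ℕ) : ℤ) : ℚ) = _
    rw [hfe k, sum_blockEmb_apply]
    push_cast
    ring
  -- block restrictions belong to `zSpan (B i)`
  have hzblock : ∀ x : ((Σ j : Fin d, Fin (μ j)) → ℤ), x ∈ zSpan (Nested A B) →
      ∀ i : Fin d, (fun j => x ⟨i, j⟩) ∈ zSpan (B i) := by
    intro x hx
    induction hx using AddSubgroup.closure_induction with
    | mem y hy =>
      intro i
      obtain ⟨w, hw, rfl⟩ := hy
      obtain ⟨a', ha', c', hc', hcb', rfl⟩ := hw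
      have hrw : (fun j => vecZ (∑ i', blockEmb μ i' (c' i').sum) ⟨i, j⟩)
          = vecZ ((c' i).sum) := by
        funext j
        show (((∑ i', blockEmb μ i' (c' i').sum) ⟨i, j⟩ : ℕ) : ℤ) = _
        rw [sum_blockEmb_apply]
        rfl
      rw [hrw, vecZ_msum]
      refine multiset_sum_mem _ ?_
      intro z hz
      obtain ⟨b, hb, rfl⟩ := Multiset.mem_map.1 hz
      exact AddSubgroup.subset_closure ⟨b, hcb' i b hb, rfl⟩
    | zero => intro i; exact zero_mem _
    | add x y hx hy ihx ihy => intro i; exact add_mem (ihx i) (ihy i)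
    | neg x hx ihx => intro i; exact neg_mem (ihx i)
  -- block restrictions belong to `qCone (B i)`
  have hqblock : ∀ i : Fin d, (fun j => v ⟨i, j⟩) ∈ qCone (B i) := by
    intro i
    refine qCone_of_multiset ((Finset.univ.val : Multiset (Fin n)).bind
        (fun k => (c k i).map (fun b => (q k, b)))) ?_ ?_
    · intro p hp
      simp only [Multiset.mem_bind, Multiset.mem_map] at hp
      obtain ⟨k, -, b, hb, rfl⟩ := hp
      exact ⟨hq k, hcb k i b hb⟩
    · funext j
      show ((v ⟨i, j⟩ : ℤ) : ℚ) = _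
      rw [hpt i j, msum_apply, Multiset.map_map, Multiset.map_bind, Multiset.sum_bind]
      rw [show ((Finset.univ.val : Multiset (Fin n)).map
          (fun k => (((c k i).map (fun b => (q k, b))).map
            ((fun x => x j) ∘ (fun p => p.1 • vecQ (vecZ p.2)))).sum)).sum
          = ∑ k : Fin n, (((c k i).map (fun b => (q k, b))).map
            ((fun x => x j) ∘ (fun p => p.1 • vecQ (vecZ p.2)))).sum from rfl]
      refine Finset.sum_congr rfl fun k _ => ?_
      rw [Multiset.map_map]
      have : ((c k i).map ((((fun x => x j) ∘ (fun p => p.1 • vecQ (vecZ p.2)))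
          ∘ (fun b => (q k, b))))).sum
          = ((c k i).map (fun b => q k * ((b j : ℕ) : ℚ))).sum := by
        refine congrArg Multiset.sum (Multiset.map_congr rfl ?_)
        intro b _
        show q k * vecQ (vecZ b) j = q k * ((b j : ℕ) : ℚ)
        simp [vecQ, vecZ]
      rw [this, Multiset.sum_map_mul_left, msum_cast]
  -- the block restrictions are honest sums of multisets of `B i`
  have hM : ∀ i : Fin d, ∃ M : Multiset (Fin (μ i) → ℕ),
      (∀ b ∈ M, b ∈ B i) ∧ (fun j => v ⟨i, j⟩) = vecZ M.sum :=
    fun i => mem_nnSpan_iff.1 (hBn i _ (hzblock v hvZ i) (hqblock i))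
  choose M hMB hMv using hM
  -- the vector of cardinalities
  set αN : Fin d → ℕ := fun i => Multiset.card (M i) with hαN
  -- card of M i via the hyperplane functional
  have hcardM : ∀ i : Fin d, ((αN i : ℕ) : ℚ) = ∑ j, wB i j * ((v ⟨i, j⟩ : ℤ) : ℚ) := by
    intro i
    have h1 : ∀ j : Fin (μ i), ((v ⟨i, j⟩ : ℤ) : ℚ) = (((M i).sum j : ℕ) : ℚ) := by
      intro j
      have h2 : v ⟨i, j⟩ = vecZ (M i).sum j := congrFun (hMv i) j
      rw [h2]
      simp [vecZ]
    rw [Finset.sum_congr rfl fun j _ => by rw [h1 j]]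
    exact (hyper i (M i) (hMB i)).symm
  -- αN lies in the integer span of A
  have hαZ : vecZ αN ∈ zSpan A := by
    -- functional computation by induction over zSpan (Nested A B)
    have main : ∀ x : ((Σ j : Fin d, Fin (μ j)) → ℤ), x ∈ zSpan (Nested A B) →
        ∃ y, y ∈ zSpan A ∧
          ∀ i : Fin d, vecQ y i = ∑ j, wB i j * ((x ⟨i, j⟩ : ℤ) : ℚ) := by
      intro x hx
      induction hx using AddSubgroup.closure_induction with
      | mem y hy =>
        obtain ⟨w, hw, rfl⟩ := hy
        obtain ⟨a', ha', c', hc', hcb', rfl⟩ := hw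
        refine ⟨vecZ a', AddSubgroup.subset_closure ⟨a', ha', rfl⟩, ?_⟩
        intro i
        have h2 : ∀ j : Fin (μ i),
            ((vecZ (∑ i', blockEmb μ i' (c' i').sum) ⟨i, j⟩ : ℤ) : ℚ)
              = (((c' i).sum j : ℕ) : ℚ) := by
          intro j
          show ((((∑ i', blockEmb μ i' (c' i').sum) ⟨i, j⟩ : ℕ) : ℤ) : ℚ) = _
          rw [sum_blockEmb_apply]
          push_cast
          ring
        rw [Finset.sum_congr rfl fun j _ => by rw [h2 j]]
        rw [hyper i (c' i) (hcb' i), hc' i]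
        norm_cast
      | zero =>
        refine ⟨0, zero_mem _, ?_⟩
        intro i
        simp [vecQ]
      | add x₁ x₂ hx₁ hx₂ ih₁ ih₂ =>
        obtain ⟨y₁, hy₁, hv₁⟩ := ih₁
        obtain ⟨y₂, hy₂, hv₂⟩ := ih₂
        refine ⟨y₁ + y₂, add_mem hy₁ hy₂, ?_⟩
        intro i
        rw [vecQ_add]
        show vecQ y₁ i + vecQ y₂ i = _
        rw [hv₁ i, hv₂ i]
        rw [← Finset.sum_add_distrib]
        refine Finset.sum_congr rfl fun j _ => ?_
        show _ = wB i j * (((x₁ + x₂) ⟨i, j⟩ : ℤ) : ℚ)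
        rw [Pi.add_apply]
        push_cast
        ring
      | neg x₁ hx₁ ih₁ =>
        obtain ⟨y₁, hy₁, hv₁⟩ := ih₁
        refine ⟨-y₁, neg_mem hy₁, ?_⟩
        intro i
        rw [vecQ_neg]
        show -(vecQ y₁ i) = _
        rw [hv₁ i]
        rw [← Finset.sum_neg_distrib]
        refine Finset.sum_congr rfl fun j _ => ?_
        show _ = wB i j * (((-x₁) ⟨i, j⟩ : ℤ) : ℚ)
        rw [Pi.neg_apply]
        push_cast
        ring
    obtain ⟨y, hy, hvy⟩ := main v hvZ
    have : y = vecZ αN := by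
      apply vecQ_injective
      funext i
      rw [hvy i, ← hcardM i]
      rfl
    rw [← this]
    exact hy
  -- αN lies in the rational cone of A
  have hαQ : vecZ αN ∈ qCone A := by
    refine ⟨n, a, q, ha, hq, ?_⟩
    funext i
    have key : ((αN i : ℕ) : ℚ) = ∑ k, q k * ((a k i : ℕ) : ℚ) := by
      rw [hcardM i]
      rw [Finset.sum_congr rfl fun j (_ : j ∈ Finset.univ) => by rw [hpt i j]]
      rw [Finset.sum_congr rfl fun j (_ : j ∈ Finset.univ) => Finset.mul_sum _ _ _]
      rw [Finset.sum_comm]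
      refine Finset.sum_congr rfl fun k _ => ?_
      have : ∀ j : Fin (μ i), wB i j * (q k * (((c k i).sum j : ℕ) : ℚ))
          = q k * (wB i j * (((c k i).sum j : ℕ) : ℚ)) := fun j => by ring
      rw [Finset.sum_congr rfl fun j _ => this j]
      rw [← Finset.mul_sum]
      rw [hyper i (c k i) (hcb k i), hc k i]
    show ((αN i : ℤ) : ℚ) = _
    rw [Finset.sum_apply]
    rw [show ((αN i : ℤ) : ℚ) = ((αN i : ℕ) : ℚ) from by push_cast; ring]
    rw [key]
    refine Finset.sum_congr rfl fun k _ => ?_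
    show q k * ((a k i : ℕ) : ℚ) = q k • vecQ (vecZ (a k)) i
    simp [vecQ, vecZ]
  -- normality of A yields a multiset decomposition of αN
  obtain ⟨L, hLA, hLsum⟩ := mem_nnSpan_iff.1 (hAn (vecZ αN) hαZ hαQ)
  have hαL : αN = L.sum := vecZ_injective hLsum
  -- assembling nested elements
  have assemble : ∀ L' : Multiset (Fin d → ℕ), (∀ a' ∈ L', a' ∈ A) →
      ∀ Ms : ∀ i : Fin d, Multiset (Fin (μ i) → ℕ), (∀ i, ∀ b ∈ Ms i, b ∈ B i) →
      (∀ i, Multiset.card (Ms i) = (L'.map (fun a' => a' i)).sum) →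
      vecZ (∑ i, blockEmb μ i (Ms i).sum) ∈ nnSpan (Nested A B) := by
    intro L'
    induction L' using Multiset.induction_on with
    | empty =>
      intro _ Ms hMs hcard
      have h0 : ∀ i, Ms i = 0 := fun i => Multiset.card_eq_zero.1 (by simpa using hcard i)
      have hz : (∑ i, blockEmb μ i (Ms i).sum) = 0 := by
        refine Finset.sum_eq_zero fun i _ => ?_
        rw [h0 i]
        show blockEmb μ i (0 : Multiset (Fin (μ i) → ℕ)).sum = 0
        rw [Multiset.sum_zero]
        exact blockEmb_zero i
      rw [hz, vecZ_zero]
      exact zero_mem _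
    | cons a' L' ih =>
      intro hL' Ms hMs hcard
      have hsplit : ∀ i, ∃ C M', Ms i = C + M' ∧ Multiset.card C = a' i := by
        intro i
        refine multiset_split (Ms i) (a' i) ?_
        rw [hcard i, Multiset.map_cons, Multiset.sum_cons]
        exact Nat.le_add_right _ _
      choose C M' hCM hCcard using hsplit
      have hrw : (∑ i, blockEmb μ i (Ms i).sum)
          = (∑ i, blockEmb μ i (C i).sum) + (∑ i, blockEmb μ i (M' i).sum) := by
        rw [← Finset.sum_add_distrib]
        refine Finset.sum_congr rfl fun i _ => ?_
        rw [hCM i, Multiset.sum_add, blockEmb_add]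
      rw [hrw, vecZ_add]
      refine add_mem ?_ ?_
      · refine AddSubmonoid.subset_closure ⟨_, ?_, rfl⟩
        exact ⟨a', hL' a' (Multiset.mem_cons_self a' L'), C, hCcard,
          fun i b hb => hMs i b (by rw [hCM i]; exact Multiset.mem_add.2 (Or.inl hb)), rfl⟩
      · refine ih (fun x hx => hL' x (Multiset.mem_cons_of_mem hx)) M'
          (fun i b hb => hMs i b (by rw [hCM i]; exact Multiset.mem_add.2 (Or.inr hb))) ?_
        intro i
        have h1 := hcard i
        have h2 : Multiset.card (Ms i) = Multiset.card (C i) + Multiset.card (M' i) := by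
          rw [hCM i, Multiset.card_add]
        have h4 := hCcard i
        rw [Multiset.map_cons, Multiset.sum_cons] at h1
        have h5 := h2.symm.trans h1
        rw [h4] at h5
        exact Nat.add_left_cancel h5
  -- write v as the vecZ of the total natural vector and conclude
  have hv : v = vecZ (∑ i, blockEmb μ i (M i).sum) := by
    funext p
    obtain ⟨i, j⟩ := p
    show v ⟨i, j⟩ = (((∑ i', blockEmb μ i' (M i').sum) ⟨i, j⟩ : ℕ) : ℤ)
    rw [sum_blockEmb_apply]
    exact congrFun (hMv i) j
  rw [hv]
  refine assemble L hLA M hMB ?_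
  intro i
  have h3 : αN i = L.sum i := congrFun hαL i
  rw [← msum_apply]
  exact h3
end

section
/- The semigroup ring K[v, uv, u^3v, u^4v, w] is not very ample: for every α ∈ Z_{≥0}, the monomial u^2 v w^α does not belong to it, so infinitely many lattice points of the cone∩lattice lie outside the semigroup. -/
open scoped BigOperators

def Sx : Set (Fin 3 → ℕ) := {![0,1,0], ![1,1,0], ![3,1,0], ![4,1,0], ![0,0,1]}

lemma zmem (α : ℕ) : vecZ ![2,1,α] ∈ zSpan Sx := by
  have h0 : vecZ ![0,1,0] ∈ zSpan Sx := AddSubgroup.subset_closure ⟨_, by simp [Sx], rfl⟩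
  have h1 : vecZ ![1,1,0] ∈ zSpan Sx := AddSubgroup.subset_closure ⟨_, by simp [Sx], rfl⟩
  have h3 : vecZ ![3,1,0] ∈ zSpan Sx := AddSubgroup.subset_closure ⟨_, by simp [Sx], rfl⟩
  have h4 : vecZ ![0,0,1] ∈ zSpan Sx := AddSubgroup.subset_closure ⟨_, by simp [Sx], rfl⟩
  have heq : vecZ ![2,1,α] = vecZ ![3,1,0] - vecZ ![1,1,0] + vecZ ![0,1,0] + α • vecZ ![0,0,1] := by
    funext i; fin_cases i <;> simp [vecZ]
  rw [heq]
  exact add_mem (add_mem (sub_mem h3 h1) h0) (AddSubgroup.nsmul_mem _ h4 α)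

lemma qmem (α : ℕ) : vecZ ![2,1,α] ∈ qCone Sx := by
  refine ⟨3, ![![0,1,0], ![4,1,0], ![0,0,1]], ![1/2, 1/2, (α:ℚ)], ?_, ?_, ?_⟩
  · intro k; fin_cases k <;> simp [Sx]
  · intro k; fin_cases k <;> norm_num
  · funext i
    fin_cases i <;>
      simp [vecQ, vecZ, Fin.sum_univ_three, Finset.sum_apply, Pi.smul_apply] <;> norm_num

lemma notmem (α : ℕ) : vecZ ![2,1,α] ∉ nnSpan Sx := by
  intro h
  have key : ∀ v ∈ nnSpan Sx,
      (v 1 = 0 → v 0 = 0) ∧ 0 ≤ v 1 ∧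
      (v 1 = 1 → v 0 = 0 ∨ v 0 = 1 ∨ v 0 = 3 ∨ v 0 = 4) := by
    intro v hv
    induction hv using AddSubmonoid.closure_induction with
    | mem x hx =>
        obtain ⟨w, hw, rfl⟩ := hx
        simp only [Sx, Set.mem_insert_iff, Set.mem_singleton_iff] at hw
        rcases hw with rfl | rfl | rfl | rfl | rfl <;> simp [vecZ]
    | zero => simp
    | add x y hx hy ihx ihy =>
        obtain ⟨hx0, hx1, hx2⟩ := ihx
        obtain ⟨hy0, hy1, hy2⟩ := ihy
        refine ⟨?_, by simp only [Pi.add_apply]; omega, ?_⟩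
        · intro h1
          simp only [Pi.add_apply] at h1 ⊢
          have ha : x 1 = 0 ∧ y 1 = 0 := by omega
          have := hx0 ha.1; have h2 := hy0 ha.2
          omega
        · intro h1
          simp only [Pi.add_apply] at h1
          have hc : (x 1 = 1 ∧ y 1 = 0) ∨ (x 1 = 0 ∧ y 1 = 1) := by omega
          rcases hc with ⟨ha, hb⟩ | ⟨ha, hb⟩
          · have := hy0 hb; have := hx2 ha; simp only [Pi.add_apply]; omega
          · have := hx0 ha; have := hy2 hb; simp only [Pi.add_apply]; omega
  have := key _ h
  simp [vecZ] at this


/-- the semigroup ring `K[v, uv, u³v, u⁴v, w]` is not very ample: for every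
`α ∈ ℤ_{≥0}` the monomial `u²vw^α` lies in the group and in the rational cone generated by
the exponent vectors but not in the semigroup, so infinitely many lattice points of
cone ∩ lattice lie outside the semigroup. -/
theorem not_veryAmple_example :
    (∀ α : ℕ,
      vecZ ![2, 1, α] ∈ zSpan ({![0,1,0], ![1,1,0], ![3,1,0], ![4,1,0], ![0,0,1]} :
          Set (Fin 3 → ℕ)) ∧
      vecZ ![2, 1, α] ∈ qCone ({![0,1,0], ![1,1,0], ![3,1,0], ![4,1,0], ![0,0,1]} :
          Set (Fin 3 → ℕ)) ∧
      vecZ ![2, 1, α] ∉ nnSpan ({![0,1,0], ![1,1,0], ![3,1,0], ![4,1,0], ![0,0,1]} :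
          Set (Fin 3 → ℕ))) ∧
    ¬ IsVeryAmpleCfg ({![0,1,0], ![1,1,0], ![3,1,0], ![4,1,0], ![0,0,1]} :
        Set (Fin 3 → ℕ)) := by

  constructor
  · intro α
    exact ⟨zmem α, qmem α, notmem α⟩
  · intro hfin
    have hinj : Function.Injective (fun α : ℕ => vecZ ![2,1,α]) := by
      intro a b hab
      have := congrFun hab 2
      simpa [vecZ] using this
    have hsub : Set.range (fun α : ℕ => vecZ ![2,1,α]) ⊆
        (((zSpan Sx : Set (Fin 3 → ℤ)) ∩ qCone Sx) \ (nnSpan Sx : Set (Fin 3 → ℤ))) := by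
      rintro _ ⟨α, rfl⟩
      exact ⟨⟨zmem α, qmem α⟩, notmem α⟩
    exact (Set.infinite_range_of_injective hinj) (hfin.subset hsub)
end

section
/- Every combinatorial pure subring of a normal affine semigroup ring is normal, and every combinatorial pure subring of a very ample affine semigroup ring is very ample. -/
open scoped BigOperators

/-- `S` is (the exponent-vector set of) a combinatorial pure subring of `T`:
`S` consists of the elements of `T` lying on a face (cut out by a supporting
hyperplane) of the convex hull of `T`. -/
def IsCPS {σ : Type*} [Fintype σ] (S T : Set (σ → ℕ)) : Prop :=
  S ⊆ T ∧ ∃ (w : σ → ℚ) (b : ℚ), (∀ v ∈ T, ∑ i, w i * (v i : ℚ) ≤ b) ∧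
    S = {v ∈ T | ∑ i, w i * (v i : ℚ) = b}


section Aux
variable {σ : Type*} [Fintype σ]

/-- The linear functional `v ↦ ∑ i, w i * v i` as an additive hom. -/
private def lwHom (w : σ → ℚ) : (σ → ℤ) →+ ℚ where
  toFun v := ∑ i, w i * (v i : ℚ)
  map_zero' := by simp
  map_add' u v := by
    rw [← Finset.sum_add_distrib]
    refine Finset.sum_congr rfl fun i _ => ?_
    simp only [Pi.add_apply]
    push_cast
    ring

private lemma list_sum_le {α : Type*} (g : α → ℚ) (b : ℚ) :
    ∀ (l : List α), (∀ x ∈ l, g x ≤ b) → (l.map g).sum ≤ b * l.length := by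
  intro l
  induction l with
  | nil => simp
  | cons a t ih =>
    intro h
    have h1 := h a (by simp)
    have h2 := ih fun x hx => h x (List.mem_cons_of_mem a hx)
    simp only [List.map_cons, List.sum_cons, List.length_cons]
    push_cast
    linarith

private lemma list_eq_of_sum {α : Type*} (g : α → ℚ) (b : ℚ) :
    ∀ (l : List α), (∀ x ∈ l, g x ≤ b) → (l.map g).sum = b * l.length →
      ∀ x ∈ l, g x = b := by
  intro l
  induction l with
  | nil => simp
  | cons a t ih =>
    intro hle hsum x hx
    have h1 := hle a (by simp)
    have h2 := list_sum_le g b t fun y hy => hle y (List.mem_cons_of_mem a hy)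
    simp only [List.map_cons, List.sum_cons, List.length_cons] at hsum
    push_cast at hsum
    have ha : g a = b := by linarith
    rcases List.mem_cons.mp hx with rfl | hx'
    · exact ha
    · exact ih (fun y hy => hle y (List.mem_cons_of_mem a hy))
        (by linarith) x hx'

private lemma list_sum_const {α : Type*} (g : α → ℚ) :
    ∀ (l : List α), (∀ x ∈ l, g x = 1) → (l.map g).sum = l.length := by
  intro l
  induction l with
  | nil => simp
  | cons a t ih =>
    intro h
    simp only [List.map_cons, List.sum_cons, List.length_cons]
    rw [h a (by simp), ih fun x hx => h x (List.mem_cons_of_mem a hx)]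
    push_cast
    ring

/-- Value of a linear functional on a member of the rational cone. -/
private lemma lw_qCone {u : σ → ℚ} {v : σ → ℤ} {Q : Set (σ → ℕ)}
    (hv : v ∈ qCone Q) (n : ℕ) (f : Fin n → (σ → ℕ)) (c : Fin n → ℚ)
    (heq : vecQ v = ∑ k, c k • vecQ (vecZ (f k))) :
    lwHom u v = ∑ k, c k * (∑ i, u i * (f k i : ℚ)) := by
  have hpt : ∀ i, (v i : ℚ) = ∑ k, c k * (f k i : ℚ) := by
    intro i
    have := congrFun heq i
    simpa [vecQ, vecZ, Finset.sum_apply] using this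
  show (∑ i, u i * (v i : ℚ)) = _
  calc (∑ i, u i * (v i : ℚ)) = ∑ i, ∑ k, u i * (c k * (f k i : ℚ)) := by
        refine Finset.sum_congr rfl fun i _ => ?_
        rw [hpt i, Finset.mul_sum]
    _ = ∑ k, ∑ i, u i * (c k * (f k i : ℚ)) := Finset.sum_comm
    _ = ∑ k, c k * (∑ i, u i * (f k i : ℚ)) := by
        refine Finset.sum_congr rfl fun k _ => ?_
        rw [Finset.mul_sum]
        exact Finset.sum_congr rfl fun i _ => by ring

/-- Key lemma: a member of `nnSpan T` whose `w`-value is maximal lies in `nnSpan S`. -/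
private lemma mem_nnSpan_face {S T : Set (σ → ℕ)} {w w0 : σ → ℚ} {b : ℚ}
    (hb : ∀ v ∈ T, ∑ i, w i * (v i : ℚ) ≤ b)
    (hSeq : S = {v ∈ T | ∑ i, w i * (v i : ℚ) = b})
    (hw0 : ∀ v ∈ T, ∑ i, w0 i * (v i : ℚ) = 1)
    {v : σ → ℤ} (hv : v ∈ nnSpan T)
    (hval : lwHom w v = b * lwHom w0 v) : v ∈ nnSpan S := by
  obtain ⟨l, hl, rfl⟩ := AddSubmonoid.exists_list_of_mem_closure hv
  have hlen : lwHom w0 l.sum = l.length := by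
    rw [map_list_sum]
    exact list_sum_const (lwHom w0) l fun x hx => by
      obtain ⟨t, ht, rfl⟩ := hl x hx
      exact hw0 t ht
  have hle : ∀ x ∈ l, lwHom w x ≤ b := by
    intro x hx
    obtain ⟨t, ht, rfl⟩ := hl x hx
    exact hb t ht
  have hsum : (l.map (lwHom w)).sum = b * l.length := by
    rw [← map_list_sum, hval, hlen]
  have heach := list_eq_of_sum (lwHom w) b l hle hsum
  refine AddSubmonoid.list_sum_mem _ fun x hx => AddSubmonoid.subset_closure ?_
  obtain ⟨t, ht, rfl⟩ := hl x hx
  exact ⟨t, by rw [hSeq]; exact ⟨ht, heach _ hx⟩, rfl⟩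

end Aux

/-- every combinatorial pure subring of a normal affine semigroup ring is
normal, and every combinatorial pure subring of a very ample affine semigroup ring is
very ample. -/
theorem cps_normal_and_veryAmple {σ : Type*} [Fintype σ] (S T : Set (σ → ℕ))
    (hT : IsConfiguration T) (hcps : IsCPS S T) :
    (IsNormalCfg T → IsNormalCfg S) ∧ (IsVeryAmpleCfg T → IsVeryAmpleCfg S) := by
  obtain ⟨hST, w, b, hb, hSeq⟩ := hcps
  obtain ⟨-, w0, hw0⟩ := hT
  have hz : (zSpan S : Set (σ → ℤ)) ⊆ zSpan T := by
    exact AddSubgroup.closure_mono (Set.image_mono hST)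
  have hq : qCone S ⊆ qCone T := by
    rintro v ⟨n, f, c, hf, hc, heq⟩
    exact ⟨n, f, c, fun k => hST (hf k), hc, heq⟩
  have hval : ∀ v ∈ qCone S, lwHom w v = b * lwHom w0 v := by
    rintro v hv
    obtain ⟨n, f, c, hf, hc, heq⟩ := hv
    rw [lw_qCone ⟨n, f, c, hf, hc, heq⟩ n f c heq,
        lw_qCone ⟨n, f, c, hf, hc, heq⟩ n f c heq]
    have h1 : ∀ k, (∑ i, w i * (f k i : ℚ)) = b := fun k => by
      have := hf k; rw [hSeq] at this; exact this.2
    have h2 : ∀ k, (∑ i, w0 i * (f k i : ℚ)) = 1 := fun k => hw0 _ (hST (hf k))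
    simp only [h1, h2, mul_one]
    rw [Finset.mul_sum]
    exact Finset.sum_congr rfl fun k _ => mul_comm _ _
  have key : ∀ v : σ → ℤ, v ∈ qCone S → v ∈ nnSpan T → v ∈ nnSpan S := by
    intro v hvq hvT
    exact mem_nnSpan_face hb hSeq hw0 hvT (hval v hvq)
  constructor
  · intro hnorm v hvz hvq
    exact key v hvq (hnorm v (hz hvz) (hq hvq))
  · intro hfin
    refine hfin.subset ?_
    rintro v ⟨⟨hvz, hvq⟩, hvn⟩
    refine ⟨⟨hz hvz, hq hvq⟩, fun hvT => hvn (key v hvq hvT)⟩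
end

section
/- (Sorting lemma) Let p_1 = x^{(k)}_{(i_1,j_1)⋯(i_r,j_r)} x^{(k)}_{(i_{r+1},j_{r+1})⋯(i_{2r},j_{2r})} be a quadratic monomial in the presentation ring of the nested configuration, and let (i_1',j_1')⋯(i_{2r}',j_{2r}') = sort((i_1,j_1)⋯(i_{2r},j_{2r})) be the weakly increasing rearrangement. Then the sorted product p_2 = x^{(k)}_{(i_1',j_1')(i_3',j_3')⋯(i_{2r-1}',j_{2r-1}')} x^{(k)}_{(i_2',j_2')(i_4',j_4')⋯(i_{2r}',j_{2r}')} is a well-defined monomial (both index strings correspond to elements of A(B_1,...,B_d) mapping to t^{a_k}), and p_1 − p_2 lies in the toric ideal I_{A(B_1,...,B_d)}. -/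
section Toric
open MvPolynomial

/-- The toric ideal of a family of monomials: the kernel of the `K`-algebra map from the
polynomial ring in variables indexed by `V` sending the `v`-th variable to the monomial
with exponent vector `π v`. -/
noncomputable def toricIdeal (K : Type*) [Field K] {V σ : Type*} [Fintype σ]
    (π : V → σ → ℕ) : Ideal (MvPolynomial V K) :=
  RingHom.ker (MvPolynomial.aeval
    (fun v => ∏ i, (MvPolynomial.X i : MvPolynomial σ K) ^ π v i) :
      MvPolynomial V K →ₐ[K] MvPolynomial σ K).toRingHom

end Toric

section Presentation

variable {n d r : ℕ} {lam : Fin d → ℕ}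

/-- The lexicographic sorting key of an index pair `(i, j)`. -/
def pairKey {d : ℕ} {lam : Fin d → ℕ} (p : Σ i : Fin d, Fin (lam i)) : Lex (ℕ × ℕ) :=
  toLex (((p.1 : ℕ)), ((p.2 : ℕ)))

/-- Variables `x^{(k)}_{(i_1,j_1)⋯(i_r,j_r)}` of the presentation ring of the nested
configuration: `k` indexes a monomial `t^{a_k}` of `A`, and `s` is a weakly increasing
(for the lexicographic order on pairs) sequence of pairs `(i_ℓ, j_ℓ)` with
`t_{i_1}⋯t_{i_r} = t^{a_k}`. -/
structure NestVar (a : Fin n → Fin d → ℕ) (r : ℕ) (lam : Fin d → ℕ) where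
  k : Fin n
  s : Fin r → Σ i : Fin d, Fin (lam i)
  mono : Monotone fun t => pairKey (s t)
  count : ∀ i : Fin d, a k i = (Finset.univ.filter fun t => (s t).1 = i).card

/-- The exponent vector of the monomial `m_{j_1}^{(i_1)}⋯m_{j_r}^{(i_r)}` represented by a
variable of the presentation ring. -/
def NestVar.val {a : Fin n → Fin d → ℕ} {μ : Fin d → ℕ}
    (m : ∀ i : Fin d, Fin (lam i) → Fin (μ i) → ℕ) (x : NestVar a r lam) :
    ((Σ j : Fin d, Fin (μ j)) → ℕ) :=
  ∑ t : Fin r, blockEmb μ (x.s t).1 (m (x.s t).1 (x.s t).2)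

/-- The multiset of index pairs `(i_ℓ, j_ℓ)` of a presentation variable. -/
def NestVar.pairs {a : Fin n → Fin d → ℕ} (x : NestVar a r lam) :
    Multiset (Σ i : Fin d, Fin (lam i)) :=
  Multiset.map x.s Finset.univ.val

end Presentation


lemma card_filter_interval (N c₁ c₂ : ℕ) (h : c₂ ≤ N) :
    (Finset.univ.filter fun t : Fin N => c₁ ≤ t.val ∧ t.val < c₂).card = c₂ - c₁ := by
  rw [Finset.card_filter, Fin.sum_univ_eq_sum_range (fun t => if c₁ ≤ t ∧ t < c₂ then 1 else 0), ← Finset.card_filter]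
  have : (Finset.range N).filter (fun t => c₁ ≤ t ∧ t < c₂) = Finset.Ico c₁ c₂ := by
    ext u; simp [Finset.mem_Ico]; omega
  rw [this, Nat.card_Ico]

lemma mem_downward {N : ℕ} (g : Fin N → ℕ) (p : ℕ → Prop) [DecidablePred p]
    (hg : Monotone g) (hp : ∀ a b : ℕ, a ≤ b → p b → p a) (t : Fin N) :
    p (g t) ↔ t.val < (Finset.univ.filter fun u => p (g u)).card := by
  constructor
  · intro h
    have hsub : Finset.Iic t ⊆ Finset.univ.filter fun u => p (g u) := by
      intro u hu
      simp only [Finset.mem_Iic] at hu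
      simp only [Finset.mem_filter, Finset.mem_univ, true_and]
      exact hp _ _ (hg hu) h
    have h1 := Finset.card_le_card hsub
    have h2 : (Finset.Iic t).card = t.val + 1 := by simp [Nat.card_Iic]
    omega
  · intro h
    by_contra hcon
    have hsub : (Finset.univ.filter fun u => p (g u)) ⊆ Finset.Iio t := by
      intro u hu
      simp only [Finset.mem_filter, Finset.mem_univ, true_and] at hu
      simp only [Finset.mem_Iio]
      by_contra hut
      push_neg at hut
      exact hcon (hp _ _ (hg hut) hu)
    have h1 := Finset.card_le_card hsub
    rw [Fin.card_Iio] at h1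
    omega

lemma countP_map_univ {α β : Type*} [Fintype α] (f : α → β) (p : β → Prop) [DecidablePred p] :
    Multiset.countP p (Multiset.map f Finset.univ.val) =
      (Finset.univ.filter fun t => p (f t)).card := by
  rw [Multiset.countP_map]; rfl

def altE (r : ℕ) : Fin r ⊕ Fin r ≃ Fin (2 * r) where
  toFun x := Sum.rec (fun t => ⟨2 * t.val, by have := t.isLt; omega⟩)
    (fun t => ⟨2 * t.val + 1, by have := t.isLt; omega⟩) x
  invFun u := if u.val % 2 = 0 then .inl ⟨u.val / 2, by have := u.isLt; omega⟩
    else .inr ⟨u.val / 2, by have := u.isLt; omega⟩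
  left_inv := by
    rintro (t | t)
    · simp
    · show (if (2 * t.val + 1) % 2 = 0 then _ else _) = _
      rw [if_neg (by omega)]
      congr 1
      exact Fin.ext (by show (2 * t.val + 1) / 2 = t.val; omega)
  right_inv := by
    intro u
    by_cases h : u.val % 2 = 0 <;> simp [h] <;> apply Fin.ext <;> simp <;> omega

open Finset in
lemma sorted_block {N : ℕ} (g : Fin N → ℕ) (hg : Monotone g) (c : ℕ) :
    ∃ Li Ui : ℕ, Li ≤ Ui ∧ Ui ≤ N ∧
      Ui - Li = (Finset.univ.filter fun t => g t = c).card ∧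
      ∀ t : Fin N, g t = c ↔ (Li ≤ t.val ∧ t.val < Ui) := by
  set Li := (Finset.univ.filter fun u : Fin N => g u < c).card with hLdef
  set Ui := (Finset.univ.filter fun u : Fin N => g u ≤ c).card with hUdef
  have h1 : ∀ t : Fin N, g t < c ↔ t.val < Li := fun t =>
    mem_downward g (fun v => v < c) hg (fun a b hab hb => by omega) t
  have h2 : ∀ t : Fin N, g t ≤ c ↔ t.val < Ui := fun t =>
    mem_downward g (fun v => v ≤ c) hg (fun a b hab hb => by omega) t
  have hch : ∀ t : Fin N, g t = c ↔ (Li ≤ t.val ∧ t.val < Ui) := by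
    intro t
    have := h1 t
    have := h2 t
    omega
  have hLU : Li ≤ Ui := by
    apply Finset.card_le_card
    intro u hu
    simp only [Finset.mem_filter, Finset.mem_univ, true_and] at hu ⊢
    omega
  have hU2 : Ui ≤ N := by
    refine le_trans (Finset.card_filter_le _ _) ?_
    simp
  refine ⟨Li, Ui, hLU, hU2, ?_, hch⟩
  rw [Finset.filter_congr (fun t _ => hch t), card_filter_interval N Li Ui hU2]

lemma countP_pairs {n d r : ℕ} {lam : Fin d → ℕ} {a : Fin n → Fin d → ℕ}
    (x : NestVar a r lam) (i : Fin d) :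
    Multiset.countP (fun q : Σ j : Fin d, Fin (lam j) => q.1 = i) x.pairs = a x.k i := by
  rw [NestVar.pairs, countP_map_univ, x.count i]

lemma quad_mem (K : Type*) [Field K] {V σ : Type*} [Fintype σ] (π : V → σ → ℕ)
    (u v w z : V) (h : ∀ q, π u q + π v q = π w q + π z q) :
    (MvPolynomial.X u * MvPolynomial.X v - MvPolynomial.X w * MvPolynomial.X z :
      MvPolynomial V K) ∈ toricIdeal K π := by
  rw [toricIdeal, RingHom.mem_ker]
  simp only [map_sub, map_mul, AlgHom.toRingHom_eq_coe, RingHom.coe_coe,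
    MvPolynomial.aeval_X]
  rw [sub_eq_zero, ← Finset.prod_mul_distrib, ← Finset.prod_mul_distrib]
  exact Finset.prod_congr rfl fun q _ => by rw [← pow_add, ← pow_add, h q]

/-- sorting lemma: if `p₁ = x^{(k)}_{(i_1,j_1)⋯} x^{(k)}_{⋯(i_{2r},j_{2r})}`
is a quadratic monomial of the presentation ring and `merged` is the weakly increasing
rearrangement of the concatenated index string, then the alternating split of `merged`
yields well-defined variables `y₁, y₂` (both with the same `k`), and
`p₁ - p₂ = X x₁ · X x₂ - X y₁ · X y₂` lies in the toric ideal of `A(B_1,…,B_d)`. -/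
theorem sorting_lemma (K : Type*) [Field K] {n d r : ℕ} {lam μ : Fin d → ℕ}
    (a : Fin n → Fin d → ℕ) (m : ∀ i : Fin d, Fin (lam i) → Fin (μ i) → ℕ)
    (x₁ x₂ : NestVar a r lam) (hk : x₁.k = x₂.k)
    (merged : Fin (2 * r) → Σ i : Fin d, Fin (lam i))
    (hmono : Monotone fun t => pairKey (merged t))
    (hms : Multiset.map merged Finset.univ.val = x₁.pairs + x₂.pairs) :
    ∃ y₁ y₂ : NestVar a r lam, y₁.k = x₁.k ∧ y₂.k = x₁.k ∧
      (∀ t : Fin r, y₁.s t = merged ⟨2 * (t : ℕ), by have := t.isLt; omega⟩) ∧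
      (∀ t : Fin r, y₂.s t = merged ⟨2 * (t : ℕ) + 1, by have := t.isLt; omega⟩) ∧
      (MvPolynomial.X x₁ * MvPolynomial.X x₂ - MvPolynomial.X y₁ * MvPolynomial.X y₂ :
          MvPolynomial (NestVar a r lam) K) ∈ toricIdeal K (NestVar.val m) := by
  classical
  -- monotonicity of the first components
  have hg2 : Monotone (fun t : Fin (2 * r) => ((merged t).1 : ℕ)) := by
    intro t t' h
    have hm := hmono h
    simp only [pairKey, Prod.Lex.le_iff] at hm
    rcases hm with h' | ⟨h', _⟩
    · exact le_of_lt h'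
    · exact le_of_eq h'
  choose L U hLU hU2 hcardLU hchar using
    fun i : Fin d => sorted_block (fun t : Fin (2 * r) => ((merged t).1 : ℕ)) hg2 i.val
  -- total count of pairs with first component i in merged
  have hcardm : ∀ i : Fin d,
      (Finset.univ.filter fun t : Fin (2 * r) => ((merged t).1 : ℕ) = (i : ℕ)).card
        = 2 * a x₁.k i := by
    intro i
    have h := congrArg
      (Multiset.countP (fun q : Σ j : Fin d, Fin (lam j) => q.1 = i)) hms
    rw [Multiset.countP_add, countP_pairs, countP_pairs, countP_map_univ] at h
    have heq : (Finset.univ.filter fun t : Fin (2 * r) => ((merged t).1 : ℕ) = (i : ℕ))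
        = Finset.univ.filter fun t : Fin (2 * r) => (merged t).1 = i := by
      apply Finset.filter_congr
      intro t _
      exact (Fin.ext_iff).symm
    rw [heq, h, ← hk]
    omega
  have hUL : ∀ i : Fin d, U i = L i + 2 * a x₁.k i := by
    intro i
    have h1 := hcardLU i
    have h2 := hcardm i
    have h3 := hLU i
    omega
  -- the two new variables
  obtain ⟨y₁, hy₁k, hy₁s⟩ : ∃ y : NestVar a r lam, y.k = x₁.k ∧
      ∀ t : Fin r, y.s t = merged ⟨2 * t.val, by have := t.isLt; omega⟩ := by
    refine ⟨⟨x₁.k, fun t => merged ⟨2 * t.val, by have := t.isLt; omega⟩, ?_, ?_⟩,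
      rfl, fun t => rfl⟩
    · intro t t' h
      exact hmono (show (⟨2 * t.val, _⟩ : Fin (2 * r)) ≤ ⟨2 * t'.val, _⟩ by
        simp only [Fin.mk_le_mk]; omega)
    · intro i
      have hc2 : (U i + 1) / 2 ≤ r := by have := hU2 i; omega
      rw [show (Finset.univ.filter fun t : Fin r =>
          (merged ⟨2 * t.val, by have := t.isLt; omega⟩).1 = i)
        = Finset.univ.filter fun t : Fin r =>
          ((L i + 1) / 2 ≤ t.val ∧ t.val < (U i + 1) / 2) from
        Finset.filter_congr fun t _ => by
          have hc := hchar i ⟨2 * t.val, by have := t.isLt; omega⟩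
          simp only [Fin.val_mk] at hc
          rw [Fin.ext_iff]
          omega]
      rw [card_filter_interval r _ _ hc2]
      have := hUL i
      omega
  obtain ⟨y₂, hy₂k, hy₂s⟩ : ∃ y : NestVar a r lam, y.k = x₁.k ∧
      ∀ t : Fin r, y.s t = merged ⟨2 * t.val + 1, by have := t.isLt; omega⟩ := by
    refine ⟨⟨x₁.k, fun t => merged ⟨2 * t.val + 1, by have := t.isLt; omega⟩, ?_, ?_⟩,
      rfl, fun t => rfl⟩
    · intro t t' h
      exact hmono (show (⟨2 * t.val + 1, _⟩ : Fin (2 * r)) ≤ ⟨2 * t'.val + 1, _⟩ by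
        simp only [Fin.mk_le_mk]; omega)
    · intro i
      have hc2 : U i / 2 ≤ r := by have := hU2 i; omega
      rw [show (Finset.univ.filter fun t : Fin r =>
          (merged ⟨2 * t.val + 1, by have := t.isLt; omega⟩).1 = i)
        = Finset.univ.filter fun t : Fin r =>
          (L i / 2 ≤ t.val ∧ t.val < U i / 2) from
        Finset.filter_congr fun t _ => by
          have hc := hchar i ⟨2 * t.val + 1, by have := t.isLt; omega⟩
          simp only [Fin.val_mk] at hc
          rw [Fin.ext_iff]
          omega]
      rw [card_filter_interval r _ _ hc2]
      have := hUL i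
      omega
  refine ⟨y₁, y₂, hy₁k, hy₂k, hy₁s, hy₂s, ?_⟩
  -- membership in the toric ideal
  refine quad_mem K (NestVar.val m) x₁ x₂ y₁ y₂ fun q => ?_
  have hval : ∀ z : NestVar a r lam, z.val m q
      = ∑ t : Fin r, blockEmb μ (z.s t).1 (m (z.s t).1 (z.s t).2) q := by
    intro z
    simp only [NestVar.val, Finset.sum_apply]
  have hsum : ∀ z : NestVar a r lam,
      (z.pairs.map (fun p : Σ j : Fin d, Fin (lam j) =>
        blockEmb μ p.1 (m p.1 p.2) q)).sum
      = ∑ t : Fin r, blockEmb μ (z.s t).1 (m (z.s t).1 (z.s t).2) q := by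
    intro z
    rw [NestVar.pairs, Multiset.map_map]
    rfl
  have hG := congrArg (fun M : Multiset (Σ j : Fin d, Fin (lam j)) =>
    (M.map (fun p : Σ j : Fin d, Fin (lam j) =>
      blockEmb μ p.1 (m p.1 p.2) q)).sum) hms
  simp only [Multiset.map_add, Multiset.sum_add] at hG
  have hmer : ((Multiset.map merged Finset.univ.val).map
      (fun p : Σ j : Fin d, Fin (lam j) => blockEmb μ p.1 (m p.1 p.2) q)).sum
      = ∑ t : Fin (2 * r), blockEmb μ (merged t).1 (m (merged t).1 (merged t).2) q := by
    rw [Multiset.map_map]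
    rfl
  have hsplit : ∑ t : Fin (2 * r),
        blockEmb μ (merged t).1 (m (merged t).1 (merged t).2) q
      = (∑ t : Fin r, blockEmb μ (y₁.s t).1 (m (y₁.s t).1 (y₁.s t).2) q)
      + ∑ t : Fin r, blockEmb μ (y₂.s t).1 (m (y₂.s t).1 (y₂.s t).2) q := by
    rw [← Equiv.sum_comp (altE r) (fun u : Fin (2 * r) =>
      blockEmb μ (merged u).1 (m (merged u).1 (merged u).2) q), Fintype.sum_sum_type]
    congr 1
    · refine Finset.sum_congr rfl fun t _ => ?_
      rw [hy₁s t]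
      rfl
    · refine Finset.sum_congr rfl fun t _ => ?_
      rw [hy₂s t]
      rfl
  rw [hval x₁, hval x₂, hval y₁, hval y₂, ← hsum x₁, ← hsum x₂, ← hG, hmer, hsplit]
end

section
/- A binomial f in K[x] belongs to the toric ideal I_{A(B_1,...,B_d)} if and only if φ_i(f) ∈ I_{B_i} for all 1 ≤ i ≤ d; moreover if f ∈ I_{A(B_1,...,B_d)} then φ_0(f) ∈ I_A. -/
open scoped BigOperators

/-- The map `φ_0 : K[x] → K[y]` sending `x^{(k)}_{…}` to `y_k`. -/
noncomputable def phiZero (K : Type*) [Field K] {n d r : ℕ} {lam : Fin d → ℕ}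
    (a : Fin n → Fin d → ℕ) :
    MvPolynomial (NestVar a r lam) K →ₐ[K] MvPolynomial (Fin n) K :=
  MvPolynomial.aeval (fun v : NestVar a r lam => MvPolynomial.X v.k)

/-- The map `φ_j : K[x] → K[z^{(j)}]` sending `x^{(k)}_{(i_1,j_1)⋯(i_r,j_r)}` to
`∏_{i_ℓ = j} z^{(j)}_{j_ℓ}`. -/
noncomputable def phiBlock (K : Type*) [Field K] {n d r : ℕ} {lam : Fin d → ℕ}
    (a : Fin n → Fin d → ℕ) (j : Fin d) :
    MvPolynomial (NestVar a r lam) K →ₐ[K] MvPolynomial (Fin (lam j)) K :=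
  MvPolynomial.aeval (fun v : NestVar a r lam =>
    ∏ t : Fin r, if h : (v.s t).1 = j then MvPolynomial.X (h ▸ (v.s t).2) else 1)


section MyAux

open MvPolynomial Finset

section AuxMono
variable {K : Type*} [CommSemiring K]

lemma prod_monomial_one' {V σ : Type*} (s : Finset V) (g : V → (σ →₀ ℕ)) :
    (∏ v ∈ s, monomial (g v) (1 : K)) = monomial (∑ v ∈ s, g v) 1 := by
  classical
  induction s using Finset.cons_induction with
  | empty => simp
  | cons a s ha ih => rw [prod_cons, sum_cons, ih, monomial_mul, one_mul]

lemma aeval_monomial_one' {V σ : Type*} (g : V → (σ →₀ ℕ)) (u : V →₀ ℕ) :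
    aeval (fun v => monomial (g v) (1 : K)) (monomial u (1 : K))
      = monomial (u.sum fun v e => e • g v) 1 := by
  classical
  rw [aeval_monomial, map_one, one_mul, Finsupp.prod, Finsupp.sum, ← prod_monomial_one']
  refine Finset.prod_congr rfl fun v _ => ?_
  rw [monomial_pow, one_pow]

lemma prod_X_pow_eq' {σ : Type*} [Fintype σ] (w : σ → ℕ) :
    (∏ i, (X i : MvPolynomial σ K) ^ w i)
      = monomial (Finsupp.equivFunOnFinite.symm w) 1 := by
  classical
  have h : ∀ i, (X i : MvPolynomial σ K) ^ w i
      = X i ^ (Finsupp.equivFunOnFinite.symm w) i := by simp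
  rw [Finset.prod_congr rfl (fun i _ => h i), monomial_eq, map_one, one_mul, Finsupp.prod]
  exact (Finset.prod_subset (Finset.subset_univ _) (by
    intro i _ hi
    rw [Finsupp.notMem_support_iff.mp hi, pow_zero])).symm

lemma sum_smul_symm_apply' {V σ : Type*} [Fintype σ] (π : V → σ → ℕ) (w : V →₀ ℕ) (i : σ) :
    (w.sum fun v e => e • Finsupp.equivFunOnFinite.symm (π v)) i
      = w.sum fun v e => e * π v i := by
  classical
  rw [Finsupp.sum_apply]
  refine Finsupp.sum_congr fun v _ => ?_
  simp

end AuxMono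

lemma binomial_mem_toricIdeal_iff' {K : Type*} [Field K] {V σ : Type*} [Fintype σ]
    (π : V → σ → ℕ) (u u' : V →₀ ℕ) :
    (monomial u (1 : K) - monomial u' 1) ∈ toricIdeal K π ↔
      ∀ i, (u.sum fun v e => e * π v i) = (u'.sum fun v e => e * π v i) := by
  classical
  have hgen : (fun v => ∏ i, (X i : MvPolynomial σ K) ^ π v i)
      = fun v => monomial (Finsupp.equivFunOnFinite.symm (π v)) 1 :=
    funext fun v => prod_X_pow_eq' _
  unfold toricIdeal
  rw [RingHom.mem_ker, AlgHom.toRingHom_eq_coe, RingHom.coe_coe, map_sub, sub_eq_zero, hgen,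
    aeval_monomial_one', aeval_monomial_one', monomial_eq_monomial_iff]
  simp only [one_ne_zero, and_false, and_true, or_false]
  rw [DFunLike.ext_iff]
  exact forall_congr' fun i => by rw [sum_smul_symm_apply', sum_smul_symm_apply']

open Finset

lemma prod_fiber_sigma' {d r : ℕ} {lam : Fin d → ℕ} (s : Fin r → Σ i : Fin d, Fin (lam i))
    {M : Type*} [CommMonoid M] (j : Fin d) (G : (Σ i : Fin d, Fin (lam i)) → M)
    (hG : ∀ p : Σ i : Fin d, Fin (lam i), p.1 ≠ j → G p = 1) :
    ∏ t, G (s t) = ∏ q : Fin (lam j),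
      G ⟨j, q⟩ ^ (Finset.univ.filter fun t => s t = ⟨j, q⟩).card := by
  classical
  rw [Finset.prod_comp]
  have h2 : (∏ b ∈ Finset.univ.image s, G b ^ (Finset.univ.filter fun t => s t = b).card)
      = ∏ b : Σ i : Fin d, Fin (lam i), G b ^ (Finset.univ.filter fun t => s t = b).card := by
    refine Finset.prod_subset (Finset.subset_univ _) ?_
    intro p _ hp
    have hc : (Finset.univ.filter fun t => s t = p).card = 0 := by
      rw [Finset.card_eq_zero, Finset.filter_eq_empty_iff]
      intro t _
      exact fun h => hp (h ▸ Finset.mem_image_of_mem s (Finset.mem_univ t))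
    rw [hc, pow_zero]
  rw [h2, ← Finset.univ_sigma_univ, Finset.prod_sigma]
  exact Finset.prod_eq_single j (fun i _ hij =>
    Finset.prod_eq_one fun q _ => by rw [hG ⟨i, q⟩ hij, one_pow])
    (fun h => absurd (Finset.mem_univ j) h)

lemma sum_fiber_sigma' {d r : ℕ} {lam : Fin d → ℕ} (s : Fin r → Σ i : Fin d, Fin (lam i))
    {M : Type*} [AddCommMonoid M] (j : Fin d) (G : (Σ i : Fin d, Fin (lam i)) → M)
    (hG : ∀ p : Σ i : Fin d, Fin (lam i), p.1 ≠ j → G p = 0) :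
    ∑ t, G (s t) = ∑ q : Fin (lam j),
      (Finset.univ.filter fun t => s t = ⟨j, q⟩).card • G ⟨j, q⟩ := by
  classical
  rw [Finset.sum_comp]
  have h2 : (∑ b ∈ Finset.univ.image s, (Finset.univ.filter fun t => s t = b).card • G b)
      = ∑ b : Σ i : Fin d, Fin (lam i), (Finset.univ.filter fun t => s t = b).card • G b := by
    refine Finset.sum_subset (Finset.subset_univ _) ?_
    intro p _ hp
    have hc : (Finset.univ.filter fun t => s t = p).card = 0 := by
      rw [Finset.card_eq_zero, Finset.filter_eq_empty_iff]
      intro t _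
      exact fun h => hp (h ▸ Finset.mem_image_of_mem s (Finset.mem_univ t))
    rw [hc, zero_smul]
  rw [h2, ← Finset.univ_sigma_univ, Finset.sum_sigma]
  exact Finset.sum_eq_single j (fun i _ hij =>
    Finset.sum_eq_zero fun q _ => by rw [hG ⟨i, q⟩ hij, smul_zero])
    (fun h => absurd (Finset.mem_univ j) h)

lemma nestVal_apply' {n d r : ℕ} {lam μ : Fin d → ℕ} {a : Fin n → Fin d → ℕ}
    (m : ∀ i : Fin d, Fin (lam i) → Fin (μ i) → ℕ) (v : NestVar a r lam)
    (j : Fin d) (q' : Fin (μ j)) :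
    NestVar.val m v ⟨j, q'⟩ =
      ∑ q : Fin (lam j), (Finset.univ.filter fun t => v.s t = ⟨j, q⟩).card * m j q q' := by
  classical
  have h1 : NestVar.val m v ⟨j, q'⟩
      = ∑ t, blockEmb μ (v.s t).1 (m (v.s t).1 (v.s t).2) ⟨j, q'⟩ := by
    unfold NestVar.val
    rw [Finset.sum_apply]
  set G : (Σ i : Fin d, Fin (lam i)) → ℕ :=
    fun p => if h : p.1 = j then m j (h ▸ p.2) q' else 0 with hGdef
  have h2 : ∀ p : Σ i : Fin d, Fin (lam i),
      blockEmb μ p.1 (m p.1 p.2) ⟨j, q'⟩ = G p := by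
    rintro ⟨i, q⟩
    by_cases h : i = j
    · subst h; simp [blockEmb, hGdef]
    · simp only [blockEmb, hGdef]
      rw [dif_neg (fun hh : j = i => h hh.symm), dif_neg h]
  rw [h1, Finset.sum_congr rfl fun t _ => h2 (v.s t),
    sum_fiber_sigma' v.s j G (fun p hp => dif_neg hp)]
  refine Finset.sum_congr rfl fun q _ => ?_
  simp [hGdef]

lemma count_fiber' {n d r : ℕ} {lam : Fin d → ℕ} {a : Fin n → Fin d → ℕ}
    (v : NestVar a r lam) (i : Fin d) :
    ∑ q : Fin (lam i), (Finset.univ.filter fun t => v.s t = ⟨i, q⟩).card = a v.k i := by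
  classical
  rw [v.count i]
  set G : (Σ i' : Fin d, Fin (lam i')) → ℕ := fun p => if p.1 = i then 1 else 0 with hGdef
  have h1 : (Finset.univ.filter fun t => (v.s t).1 = i).card = ∑ t, G (v.s t) := by
    rw [Finset.card_filter]
  rw [h1, sum_fiber_sigma' v.s i G (fun p hp => if_neg hp)]
  refine (Finset.sum_congr rfl fun q _ => ?_).symm
  simp [hGdef]

lemma phiBlock_monomial' {K : Type*} [Field K] {n d r : ℕ} {lam : Fin d → ℕ}
    (a : Fin n → Fin d → ℕ) (j : Fin d) (u : NestVar a r lam →₀ ℕ) :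
    phiBlock K a j (monomial u 1) =
      monomial (u.sum fun v e =>
        e • Finsupp.equivFunOnFinite.symm fun q : Fin (lam j) =>
          (Finset.univ.filter fun t => v.s t = ⟨j, q⟩).card) 1 := by
  classical
  have hgen : ∀ v : NestVar a r lam,
      (∏ t : Fin r, if h : (v.s t).1 = j then
          (MvPolynomial.X (h ▸ (v.s t).2) : MvPolynomial (Fin (lam j)) K) else 1)
        = monomial (Finsupp.equivFunOnFinite.symm fun q : Fin (lam j) =>
            (Finset.univ.filter fun t => v.s t = ⟨j, q⟩).card) 1 := by
    intro v
    set G : (Σ i : Fin d, Fin (lam i)) → MvPolynomial (Fin (lam j)) K :=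
      fun p => if h : p.1 = j then MvPolynomial.X (h ▸ p.2) else 1 with hGdef
    have h0 : (∏ t : Fin r, if h : (v.s t).1 = j then
          (MvPolynomial.X (h ▸ (v.s t).2) : MvPolynomial (Fin (lam j)) K) else 1)
        = ∏ t, G (v.s t) := rfl
    rw [h0, prod_fiber_sigma' v.s j G (fun p hp => dif_neg hp)]
    rw [← prod_X_pow_eq']
    refine Finset.prod_congr rfl fun q _ => ?_
    congr 1
    simp [hGdef]
  have hphi : phiBlock K a j
      = MvPolynomial.aeval (fun v : NestVar a r lam =>
          monomial (Finsupp.equivFunOnFinite.symm fun q : Fin (lam j) =>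
            (Finset.univ.filter fun t => v.s t = ⟨j, q⟩).card) (1 : K)) := by
    unfold phiBlock
    exact congrArg _ (funext hgen)
  rw [hphi, aeval_monomial_one']

lemma phiZero_monomial' {K : Type*} [Field K] {n d r : ℕ} {lam : Fin d → ℕ}
    (a : Fin n → Fin d → ℕ) (u : NestVar a r lam →₀ ℕ) :
    phiZero K a (monomial u 1) =
      monomial (u.sum fun v e => Finsupp.single v.k e) 1 := by
  classical
  have hphi : phiZero K a (n := n) (r := r) (lam := lam)
      = MvPolynomial.aeval (fun v : NestVar a r lam =>
          monomial (Finsupp.single v.k 1) (1 : K)) := by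
    rfl
  rw [hphi, aeval_monomial_one']
  refine congrArg (fun w => monomial w (1 : K)) ?_
  refine Finsupp.sum_congr fun v _ => ?_
  rw [Finsupp.smul_single, smul_eq_mul, mul_one]

end MyAux

open MvPolynomial Finset in
lemma hEq_lemma {n d r : ℕ} {lam μ : Fin d → ℕ} {a : Fin n → Fin d → ℕ}
    (m : ∀ i : Fin d, Fin (lam i) → Fin (μ i) → ℕ)
    (w : NestVar a r lam →₀ ℕ) (j : Fin d) (q' : Fin (μ j)) :
    ((w.sum fun v e => e • Finsupp.equivFunOnFinite.symm fun q : Fin (lam j) =>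
        (Finset.univ.filter fun t => v.s t = ⟨j, q⟩).card).sum
      fun q e => e * m j q q') = w.sum fun v e => e * NestVar.val m v ⟨j, q'⟩ := by
  classical
  have h1 : ((w.sum fun v e => e • Finsupp.equivFunOnFinite.symm fun q : Fin (lam j) =>
        (Finset.univ.filter fun t => v.s t = ⟨j, q⟩).card).sum fun q e => e * m j q q')
      = ∑ q : Fin (lam j),
          (w.sum fun v e => e • Finsupp.equivFunOnFinite.symm fun q : Fin (lam j) =>
            (Finset.univ.filter fun t => v.s t = ⟨j, q⟩).card) q * m j q q' := by
    unfold Finsupp.sum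
    exact Finset.sum_subset (Finset.subset_univ _) fun q _ hq => by
      simp [Finsupp.notMem_support_iff.mp hq]
  have h2 : ∀ q : Fin (lam j),
      (w.sum fun v e => e • Finsupp.equivFunOnFinite.symm fun q : Fin (lam j) =>
        (Finset.univ.filter fun t => v.s t = ⟨j, q⟩).card) q
      = w.sum fun v e => e * (Finset.univ.filter fun t => v.s t = ⟨j, q⟩).card := by
    intro q
    rw [Finsupp.sum_apply]
    refine Finsupp.sum_congr fun v _ => ?_
    simp
  rw [h1]
  calc (∑ q : Fin (lam j),
        (w.sum fun v e => e • Finsupp.equivFunOnFinite.symm fun q : Fin (lam j) =>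
          (Finset.univ.filter fun t => v.s t = ⟨j, q⟩).card) q * m j q q')
      = ∑ q : Fin (lam j),
          (w.sum fun v e => e * (Finset.univ.filter fun t => v.s t = ⟨j, q⟩).card)
            * m j q q' := Finset.sum_congr rfl fun q _ => by rw [h2 q]
    _ = ∑ q : Fin (lam j), ∑ v ∈ w.support,
          w v * (Finset.univ.filter fun t => v.s t = ⟨j, q⟩).card * m j q q' := by
        refine Finset.sum_congr rfl fun q _ => ?_
        unfold Finsupp.sum
        rw [Finset.sum_mul]
    _ = ∑ v ∈ w.support, ∑ q : Fin (lam j),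
          w v * (Finset.univ.filter fun t => v.s t = ⟨j, q⟩).card * m j q q' :=
        Finset.sum_comm
    _ = ∑ v ∈ w.support, w v * NestVar.val m v ⟨j, q'⟩ := by
        refine Finset.sum_congr rfl fun v _ => ?_
        rw [nestVal_apply', Finset.mul_sum]
        exact Finset.sum_congr rfl fun q _ => by ring
    _ = w.sum fun v e => e * NestVar.val m v ⟨j, q'⟩ := rfl

lemma sum_a_eq' {n d r : ℕ} {lam μ : Fin d → ℕ} {a : Fin n → Fin d → ℕ}
    (m : ∀ i : Fin d, Fin (lam i) → Fin (μ i) → ℕ) (i : Fin d)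
    (hBi : IsConfiguration (Set.range (m i))) (u u' : NestVar a r lam →₀ ℕ)
    (H : ∀ p : Σ j : Fin d, Fin (μ j),
      (u.sum fun v e => e * NestVar.val m v p) = (u'.sum fun v e => e * NestVar.val m v p)) :
    (u.sum fun v e => e * a v.k i) = u'.sum fun v e => e * a v.k i := by
  classical
  obtain ⟨-, w, hw⟩ := hBi
  have hw' : ∀ j' : Fin (lam i), (∑ q' : Fin (μ i), w q' * (m i j' q' : ℚ)) = 1 :=
    fun j' => hw _ ⟨j', rfl⟩
  have key : ∀ v : NestVar a r lam,
      (∑ q' : Fin (μ i), w q' * (NestVar.val m v ⟨i, q'⟩ : ℚ)) = (a v.k i : ℚ) := by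
    intro v
    have hval : ∀ q' : Fin (μ i), (NestVar.val m v ⟨i, q'⟩ : ℚ)
        = ∑ q : Fin (lam i),
          ((Finset.univ.filter fun t => v.s t = ⟨i, q⟩).card : ℚ) * (m i q q' : ℚ) := by
      intro q'
      rw [nestVal_apply']
      push_cast
      rfl
    calc (∑ q' : Fin (μ i), w q' * (NestVar.val m v ⟨i, q'⟩ : ℚ))
        = ∑ q' : Fin (μ i), ∑ q : Fin (lam i),
            w q' * (((Finset.univ.filter fun t => v.s t = ⟨i, q⟩).card : ℚ)
              * (m i q q' : ℚ)) := by
          refine Finset.sum_congr rfl fun q' _ => ?_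
          rw [hval q', Finset.mul_sum]
      _ = ∑ q : Fin (lam i), ∑ q' : Fin (μ i),
            w q' * (((Finset.univ.filter fun t => v.s t = ⟨i, q⟩).card : ℚ)
              * (m i q q' : ℚ)) := Finset.sum_comm
      _ = ∑ q : Fin (lam i),
            ((Finset.univ.filter fun t => v.s t = ⟨i, q⟩).card : ℚ)
              * ∑ q' : Fin (μ i), w q' * (m i q q' : ℚ) := by
          refine Finset.sum_congr rfl fun q _ => ?_
          rw [Finset.mul_sum]
          exact Finset.sum_congr rfl fun q' _ => by ring
      _ = ∑ q : Fin (lam i),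
            (((Finset.univ.filter fun t => v.s t = ⟨i, q⟩).card : ℕ) : ℚ) := by
          refine Finset.sum_congr rfl fun q _ => ?_
          rw [hw' q, mul_one]
      _ = (a v.k i : ℚ) := by rw [← Nat.cast_sum, count_fiber']
  have expand : ∀ z : NestVar a r lam →₀ ℕ,
      ((z.sum fun v e => e * a v.k i : ℕ) : ℚ)
        = ∑ q' : Fin (μ i), w q' * ((z.sum fun v e => e * NestVar.val m v ⟨i, q'⟩ : ℕ) : ℚ) := by
    intro z
    unfold Finsupp.sum
    push_cast
    calc (∑ v ∈ z.support, (z v : ℚ) * (a v.k i : ℚ))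
        = ∑ v ∈ z.support, ∑ q' : Fin (μ i),
            (z v : ℚ) * (w q' * (NestVar.val m v ⟨i, q'⟩ : ℚ)) := by
          refine Finset.sum_congr rfl fun v _ => ?_
          rw [← key v, Finset.mul_sum]
      _ = ∑ q' : Fin (μ i), ∑ v ∈ z.support,
            (z v : ℚ) * (w q' * (NestVar.val m v ⟨i, q'⟩ : ℚ)) := Finset.sum_comm
      _ = ∑ q' : Fin (μ i), w q'
            * ∑ v ∈ z.support, (z v : ℚ) * (NestVar.val m v ⟨i, q'⟩ : ℚ) := by
          refine Finset.sum_congr rfl fun q' _ => ?_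
          rw [Finset.mul_sum]
          exact Finset.sum_congr rfl fun v _ => by ring
  have hcast : ((u.sum fun v e => e * a v.k i : ℕ) : ℚ)
      = ((u'.sum fun v e => e * a v.k i : ℕ) : ℚ) := by
    rw [expand u, expand u']
    refine Finset.sum_congr rfl fun q' _ => ?_
    rw [H ⟨i, q'⟩]
  exact_mod_cast hcast

/-- a binomial `f` of the presentation ring belongs to the toric ideal
`I_{A(B_1,…,B_d)}` if and only if `φ_j(f) ∈ I_{B_j}` for all `j`; moreover if
`f ∈ I_{A(B_1,…,B_d)}` then `φ_0(f) ∈ I_A`. -/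
theorem binomial_in_nested_iff (K : Type*) [Field K] {n d r : ℕ} {lam μ : Fin d → ℕ}
    (a : Fin n → Fin d → ℕ) (m : ∀ i : Fin d, Fin (lam i) → Fin (μ i) → ℕ)
    (hA : IsConfiguration (Set.range a))
    (hdeg : ∀ k, ∑ i, a k i = r)
    (hB : ∀ i, IsConfiguration (Set.range (m i)))
    (u u' : NestVar a r lam →₀ ℕ)
    (f : MvPolynomial (NestVar a r lam) K)
    (hf : f = MvPolynomial.monomial u 1 - MvPolynomial.monomial u' 1) :
    (f ∈ toricIdeal K (NestVar.val m) ↔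
      ∀ j : Fin d, phiBlock K a j f ∈ toricIdeal K (m j)) ∧
    (f ∈ toricIdeal K (NestVar.val m) → phiZero K a f ∈ toricIdeal K a) := by
  classical
  subst hf
  have hnested : (MvPolynomial.monomial u (1 : K) - MvPolynomial.monomial u' 1)
      ∈ toricIdeal K (NestVar.val m) ↔
      ∀ p : Σ j : Fin d, Fin (μ j),
        (u.sum fun v e => e * NestVar.val m v p)
          = (u'.sum fun v e => e * NestVar.val m v p) :=
    binomial_mem_toricIdeal_iff' _ u u'
  have hphi : ∀ j : Fin d,
      (phiBlock K a j (MvPolynomial.monomial u (1 : K) - MvPolynomial.monomial u' 1)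
          ∈ toricIdeal K (m j) ↔
        ∀ q' : Fin (μ j),
          (u.sum fun v e => e * NestVar.val m v ⟨j, q'⟩)
            = (u'.sum fun v e => e * NestVar.val m v ⟨j, q'⟩)) := by
    intro j
    rw [map_sub, phiBlock_monomial', phiBlock_monomial', binomial_mem_toricIdeal_iff']
    refine forall_congr' fun q' => ?_
    rw [hEq_lemma m u j q', hEq_lemma m u' j q']
  constructor
  · rw [hnested]
    constructor
    · intro H j
      rw [hphi j]
      intro q'
      exact H ⟨j, q'⟩
    · intro H p
      rcases p with ⟨j, q'⟩
      exact (hphi j).mp (H j) q'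
  · rw [hnested]
    intro H
    rw [map_sub, phiZero_monomial', phiZero_monomial', binomial_mem_toricIdeal_iff']
    intro i
    have hred : ∀ z : NestVar a r lam →₀ ℕ,
        ((z.sum fun v e => Finsupp.single v.k e).sum fun k e => e * a k i)
          = z.sum fun v e => e * a v.k i := by
      intro z
      rw [show (z.sum fun v e => Finsupp.single v.k e)
            = Finsupp.mapDomain (fun v : NestVar a r lam => v.k) z from rfl]
      exact Finsupp.sum_mapDomain_index (fun k => zero_mul _) (fun k e e' => add_mul e e' _)
    rw [hred u, hred u']
    exact sum_a_eq' m i (hB i) u u' H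
end
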